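/- arXiv:2212.03159 — 5 statements merged into one kernel-verified Lean document; each statement's English description precedes it below -/
import Mathlib

section
/- Let α ≤ 0 and 1 ≤ p ≤ ∞. There is no function f ∈ H(𝔻) hypercyclic for T_α for which there exists a constant C > 0 with M_p(f,r) ≤ C·(1−r)^α for all 0 < r < 1. -/
open Filter Set MeasureTheory
open scoped Topology ENNReal Real Classical

noncomputable section

/-- The weighted Taylor shift `T_α` acting on Taylor-coefficient sequences:
`(T_α a) k = a (k+1) * (1 + 1/(k+1))^α`. -/
def Tshift (α : ℝ) (a : ℕ → ℂ) : ℕ → ℂ :=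
  fun k => a (k + 1) * (((1 + 1 / ((k : ℝ) + 1)) ^ α : ℝ) : ℂ)

/-- The holomorphic function on the unit disc determined by a coefficient sequence. -/
def sumFn (a : ℕ → ℂ) : ℂ → ℂ := fun z => ∑' k : ℕ, a k * z ^ k

/-- `a` is the Taylor-coefficient sequence of a function in `H(𝔻)`
(the power series converges on every disc of radius `r < 1`). -/
def InHD (a : ℕ → ℂ) : Prop :=
  ∀ r : ℝ, 0 ≤ r → r < 1 → Summable (fun k : ℕ => ‖a k‖ * r ^ k)

/-- The integral mean `M_p(f, r)`, `1 ≤ p ≤ ∞`, of the function with coefficient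
sequence `a`. -/
def Mp (p : ℝ≥0∞) (a : ℕ → ℂ) (r : ℝ) : ℝ :=
  if p = ∞ then
    sSup ((fun t : ℝ => ‖sumFn a (r * Complex.exp (Complex.I * t))‖) '' Set.Icc 0 (2 * π))
  else
    (1 / (2 * π) * ∫ t in (0:ℝ)..(2 * π),
      ‖sumFn a (r * Complex.exp (Complex.I * t))‖ ^ p.toReal) ^ (1 / p.toReal)

/-- Upper weighted density of `A ⊆ ℕ` associated with a weight sequence `β`. -/
def upperDensityWt (β : ℕ → ℝ) (A : Set ℕ) : ℝ :=
  Filter.limsup (fun n : ℕ =>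
    (∑ k ∈ Finset.Icc 1 n, A.indicator (fun j => β j) k) / ∑ k ∈ Finset.Icc 1 n, β k)
    Filter.atTop

/-- The weight sequence `β^γ = (e^{n^γ})`. -/
def betaGamma (γ : ℝ) : ℕ → ℝ := fun n => Real.exp ((n : ℝ) ^ γ)

/-- `a` is hypercyclic for `T_α`: its orbit is dense in `H(𝔻)` for the topology of
uniform convergence on compact subsets of the unit disc. -/
def Hypercyclic (α : ℝ) (a : ℕ → ℂ) : Prop :=
  ∀ b : ℕ → ℂ, InHD b → ∀ K : Set ℂ, IsCompact K → K ⊆ Metric.ball (0 : ℂ) 1 →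
    ∀ ε : ℝ, 0 < ε → ∃ n : ℕ, ∀ z ∈ K, ‖sumFn ((Tshift α)^[n] a) z - sumFn b z‖ < ε

/-- `a` is `𝒰_β`-frequently hypercyclic for `T_α`: for every nonempty basic open set of
`H(𝔻)`, the set of return times has positive upper `β`-density. -/
def UFHCwt (β : ℕ → ℝ) (α : ℝ) (a : ℕ → ℂ) : Prop :=
  ∀ b : ℕ → ℂ, InHD b → ∀ K : Set ℂ, IsCompact K → K ⊆ Metric.ball (0 : ℂ) 1 →
    ∀ ε : ℝ, 0 < ε →
      0 < upperDensityWt β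
        {n : ℕ | ∀ z ∈ K, ‖sumFn ((Tshift α)^[n] a) z - sumFn b z‖ < ε}

/-- `a` is `𝒰`-frequently hypercyclic for `T_α` (natural upper density of return times). -/
def UFreqHC (α : ℝ) (a : ℕ → ℂ) : Prop := UFHCwt (fun _ => 1) α a

/-- The conjugate exponent `q` of `p` (`q = 1` when `p = ∞`). -/
def qConj (p : ℝ≥0∞) : ℝ := if p = ∞ then 1 else p.toReal / (p.toReal - 1)

/-- The quantity `1 / max(2, q)`, interpreted as `0` when `p = 1`. -/
def critFactor (p : ℝ≥0∞) : ℝ := if p = 1 then 0 else 1 / max 2 (qConj p)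

/-- `limsup_{r → 1⁻}` of a real-valued function of `r ∈ (0,1)`, computed in `EReal`. -/
def limsupR (g : ℝ → ℝ) : EReal :=
  Filter.limsup (fun r : ℝ => (g r : EReal)) (nhdsWithin 1 (Set.Ioo 0 1))

end

noncomputable section HelperLemmas

lemma norm_term (a : ℕ → ℂ) {r : ℝ} (hr : 0 ≤ r) (k : ℕ) (t : ℝ) :
    ‖a k * (↑r * Complex.exp (Complex.I * t)) ^ k‖ = ‖a k‖ * r ^ k := by
  have h1 : ‖Complex.exp (Complex.I * t)‖ = 1 := by
    rw [Complex.norm_exp]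
    simp
  rw [norm_mul, norm_pow, norm_mul, h1, mul_one, Complex.norm_real,
    Real.norm_of_nonneg hr]

lemma cont_f (a : ℕ → ℂ) (ha : InHD a) {r : ℝ} (hr0 : 0 ≤ r) (hr1 : r < 1) :
    Continuous (fun t : ℝ => sumFn a (↑r * Complex.exp (Complex.I * t))) := by
  have : (fun t : ℝ => sumFn a (↑r * Complex.exp (Complex.I * t)))
      = fun t : ℝ => ∑' k : ℕ, a k * (↑r * Complex.exp (Complex.I * t)) ^ k := rfl
  rw [this]
  apply continuous_tsum (u := fun k => ‖a k‖ * r ^ k)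
  · intro k; fun_prop
  · exact ha r hr0 hr1
  · intro k t; exact (norm_term a hr0 k t).le

lemma summable_f (a : ℕ → ℂ) (ha : InHD a) {r : ℝ} (hr0 : 0 ≤ r) (hr1 : r < 1) (t : ℝ) :
    Summable (fun k : ℕ => a k * (↑r * Complex.exp (Complex.I * t)) ^ k) := by
  apply Summable.of_norm
  have := ha r hr0 hr1
  simpa only [norm_term a hr0] using this

lemma term_eq (a : ℕ → ℂ) (r : ℝ) (n k : ℕ) (t : ℝ) :
    a k * (↑r * Complex.exp (Complex.I * t)) ^ k * Complex.exp (↑(-(n:ℝ) * t) * Complex.I)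
      = (a k * (r:ℂ) ^ k) * Complex.exp (↑(((k:ℝ) - n) * t) * Complex.I) := by
  have h : Complex.exp ((k:ℂ) * (Complex.I * t)) * Complex.exp (↑(-(n:ℝ) * t) * Complex.I)
      = Complex.exp (↑(((k:ℝ) - n) * t) * Complex.I) := by
    rw [← Complex.exp_add]; congr 1; push_cast; ring
  rw [mul_pow, ← Complex.exp_nat_mul,
    show ∀ A B E1 E2 : ℂ, A * (B * E1) * E2 = A * B * (E1 * E2) from by intros; ring, h]

def Fterm (a : ℕ → ℂ) (r : ℝ) (n k : ℕ) (t : ℝ) : ℂ :=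
  (a k * (r:ℂ) ^ k) * Complex.exp (↑(((k:ℝ) - n) * t) * Complex.I)

lemma norm_Fterm (a : ℕ → ℂ) {r : ℝ} (hr0 : 0 ≤ r) (n k : ℕ) (t : ℝ) :
    ‖Fterm a r n k t‖ = ‖a k‖ * r ^ k := by
  rw [Fterm]
  simp only [norm_mul, Complex.norm_exp_ofReal_mul_I, mul_one]
  rw [norm_pow, Complex.norm_real,
    Real.norm_of_nonneg hr0]

lemma integral_Fterm (a : ℕ → ℂ) (r : ℝ) (n k : ℕ) :
    (∫ t in Set.Ioc (0:ℝ) (2*π), Fterm a r n k t)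
      = if k = n then (2*π) * (a n * (r:ℂ) ^ n) else 0 := by
  have h2π : (0:ℝ) ≤ 2*π := by positivity
  rw [← intervalIntegral.integral_of_le h2π]
  by_cases hk : k = n
  · subst hk
    simp only [Fterm, sub_self, zero_mul, Complex.ofReal_zero, Complex.exp_zero, mul_one]
    rw [intervalIntegral.integral_const]
    simp [smul_eq_mul]
    try ring
  · have hc : ((k:ℂ) - n) * Complex.I ≠ 0 := by
      refine mul_ne_zero ?_ Complex.I_ne_zero
      rw [sub_ne_zero]
      exact fun h => hk (by exact_mod_cast h)
    have h1 : (∫ t in (0:ℝ)..(2*π), Fterm a r n k t)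
        = (a k * (r:ℂ)^k) * ∫ t in (0:ℝ)..(2*π),
            Complex.exp ((((k:ℂ) - n) * Complex.I) * t) := by
      rw [← intervalIntegral.integral_const_mul]
      refine intervalIntegral.integral_congr fun t _ => ?_
      rw [Fterm]; congr 2; push_cast; ring
    rw [h1, integral_exp_mul_complex hc]
    simp only [hk, if_false]
    have he : Complex.exp ((((k:ℂ) - n) * Complex.I) * ((2*π : ℝ) : ℂ)) = 1 := by
      rw [show (((k:ℂ) - n) * Complex.I) * ((2*π : ℝ) : ℂ) = (((k:ℤ) - (n:ℤ) : ℤ) : ℂ) * (2*(π:ℂ)*Complex.I) by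
        push_cast; ring]
      exact Complex.exp_int_mul_two_pi_mul_I _
    rw [he]
    simp

lemma myFourierCoeff (a : ℕ → ℂ) (ha : InHD a) {r : ℝ} (hr0 : 0 ≤ r) (hr1 : r < 1) (n : ℕ) :
    (∫ t in (0:ℝ)..(2*π),
        sumFn a (↑r * Complex.exp (Complex.I * t)) * Complex.exp (↑(-(n:ℝ) * t) * Complex.I))
      = (2*π) * (a n * (r:ℂ) ^ n) := by
  have h2π : (0:ℝ) ≤ 2*π := by positivity
  have hint : (∫ t in (0:ℝ)..(2*π),
        sumFn a (↑r * Complex.exp (Complex.I * t)) * Complex.exp (↑(-(n:ℝ) * t) * Complex.I))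
      = ∫ t in Set.Ioc (0:ℝ) (2*π), ∑' k, Fterm a r n k t := by
    rw [intervalIntegral.integral_of_le h2π]
    congr 1
    funext t
    rw [show sumFn a (↑r * Complex.exp (Complex.I * t))
        = ∑' k, a k * (↑r * Complex.exp (Complex.I * t)) ^ k from rfl,
      ← tsum_mul_right]
    exact tsum_congr fun k => term_eq a r n k t
  rw [hint, MeasureTheory.integral_tsum]
  · rw [tsum_congr (integral_Fterm a r n), tsum_eq_single n (by intro k hk; simp [hk])]
    simp
  · intro k
    apply Continuous.aestronglyMeasurable
    unfold Fterm
    fun_prop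
  · have hcn : ∀ k, (fun t : ℝ => ‖Fterm a r n k t‖ₑ)
        = fun _ => ENNReal.ofReal (‖a k‖ * r ^ k) := by
      intro k; funext t
      rw [← norm_Fterm a hr0 n k t, ofReal_norm]
    have hlint : ∀ k, (∫⁻ t in Set.Ioc (0:ℝ) (2*π), ‖Fterm a r n k t‖ₑ)
        = ENNReal.ofReal (‖a k‖ * r ^ k) * ENNReal.ofReal (2*π) := by
      intro k
      rw [hcn k, MeasureTheory.lintegral_const, Measure.restrict_apply_univ, Real.volume_Ioc]
      norm_num
    rw [tsum_congr hlint, ENNReal.tsum_mul_right]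
    apply ENNReal.mul_ne_top _ ENNReal.ofReal_ne_top
    rw [← ENNReal.ofReal_tsum_of_nonneg (fun k => by positivity) (ha r hr0 hr1)]
    exact ENNReal.ofReal_ne_top

lemma coeff_le_M1 (a : ℕ → ℂ) (ha : InHD a) {r : ℝ} (hr0 : 0 ≤ r) (hr1 : r < 1) (n : ℕ) :
    ‖a n‖ * r ^ n ≤ (1 / (2*π)) * ∫ t in (0:ℝ)..(2*π),
      ‖sumFn a (↑r * Complex.exp (Complex.I * t))‖ := by
  have h2π : (0:ℝ) ≤ 2*π := by positivity
  have h2π' : (0:ℝ) < 2*π := by positivity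
  have key : (2*π) * (‖a n‖ * r ^ n) ≤ ∫ t in (0:ℝ)..(2*π),
      ‖sumFn a (↑r * Complex.exp (Complex.I * t))‖ := by
    have h1 : (2*π) * (‖a n‖ * r ^ n)
        = ‖(2*π : ℂ) * (a n * (r:ℂ) ^ n)‖ := by
      rw [show ((2*π : ℂ)) = ((2*π : ℝ) : ℂ) by push_cast; ring, norm_mul,
        Complex.norm_real, Real.norm_of_nonneg h2π, norm_mul, norm_pow,
        Complex.norm_real, Real.norm_of_nonneg hr0]
    rw [h1, ← myFourierCoeff a ha hr0 hr1 n]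
    refine le_trans (intervalIntegral.norm_integral_le_integral_norm h2π) ?_
    refine le_of_eq (intervalIntegral.integral_congr fun t _ => ?_)
    simp only [norm_mul, Complex.norm_exp_ofReal_mul_I, mul_one]
  calc ‖a n‖ * r ^ n = (1/(2*π)) * ((2*π) * (‖a n‖ * r ^ n)) := by field_simp
    _ ≤ _ := by
        apply mul_le_mul_of_nonneg_left key
        positivity

lemma M1_le_Minf (a : ℕ → ℂ) (ha : InHD a) {r : ℝ} (hr0 : 0 ≤ r) (hr1 : r < 1) :
    (1 / (2*π)) * (∫ t in (0:ℝ)..(2*π), ‖sumFn a (↑r * Complex.exp (Complex.I * t))‖)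
      ≤ Mp ∞ a r := by
  have h2π : (0:ℝ) ≤ 2*π := by positivity
  have h2π' : (0:ℝ) < 2*π := by positivity
  set g : ℝ → ℝ := fun t => ‖sumFn a (↑r * Complex.exp (Complex.I * t))‖ with hg
  have hgc : Continuous g := (cont_f a ha hr0 hr1).norm
  have hbdd : BddAbove (g '' Set.Icc 0 (2*π)) :=
    (isCompact_Icc.image hgc).bddAbove
  have hle : ∀ t ∈ Set.Icc (0:ℝ) (2*π), g t ≤ sSup (g '' Set.Icc 0 (2*π)) :=
    fun t ht => le_csSup hbdd (Set.mem_image_of_mem g ht)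
  have hint : (∫ t in (0:ℝ)..(2*π), g t)
      ≤ ∫ _t in (0:ℝ)..(2*π), sSup (g '' Set.Icc 0 (2*π)) := by
    apply intervalIntegral.integral_mono_on h2π (hgc.intervalIntegrable _ _)
      (intervalIntegrable_const) hle
  rw [Mp, if_pos rfl]
  calc (1/(2*π)) * (∫ t in (0:ℝ)..(2*π), g t)
      ≤ (1/(2*π)) * ((2*π) * sSup (g '' Set.Icc 0 (2*π))) := by
        apply mul_le_mul_of_nonneg_left _ (by positivity)
        simpa [smul_eq_mul] using hint
    _ = sSup (g '' Set.Icc 0 (2*π)) := by field_simp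

lemma M1_le_Mp (a : ℕ → ℂ) (ha : InHD a) {r : ℝ} (hr0 : 0 ≤ r) (hr1 : r < 1)
    (p : ℝ≥0∞) (hp : 1 ≤ p) (hptop : p ≠ ∞) :
    (1 / (2*π)) * (∫ t in (0:ℝ)..(2*π), ‖sumFn a (↑r * Complex.exp (Complex.I * t))‖)
      ≤ Mp p a r := by
  have h2π : (0:ℝ) ≤ 2*π := by positivity
  have h2π' : (0:ℝ) < 2*π := by positivity
  set pt : ℝ := p.toReal with hpt
  have hpt1 : 1 ≤ pt := by
    rw [hpt, ← ENNReal.toReal_one]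
    exact ENNReal.toReal_mono hptop hp
  have hpt0 : 0 < pt := lt_of_lt_of_le one_pos hpt1
  set f : ℝ → ℂ := fun t => sumFn a (↑r * Complex.exp (Complex.I * t)) with hf
  have hfc : Continuous f := cont_f a ha hr0 hr1
  set μ : Measure ℝ := volume.restrict (Set.Ioc 0 (2*π)) with hμ
  have hfi : Integrable f μ := hfc.integrableOn_Ioc
  have hgi : Integrable (fun t => ‖f t‖ ^ pt) μ :=
    (hfc.norm.rpow_const (fun t => Or.inr hpt0.le)).integrableOn_Ioc
  -- eLpNorm comparison
  have key := MeasureTheory.eLpNorm_le_eLpNorm_mul_rpow_measure_univ (μ := μ)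
    (p := 1) (q := p) hp hfc.aestronglyMeasurable
  have h1 : eLpNorm f 1 μ = ENNReal.ofReal (∫ t, ‖f t‖ ∂μ) := by
    rw [MeasureTheory.eLpNorm_one_eq_lintegral_enorm,
      ← MeasureTheory.ofReal_integral_norm_eq_lintegral_enorm hfi]
  have h2 : eLpNorm f p μ = ENNReal.ofReal (∫ t, ‖f t‖ ^ pt ∂μ) ^ (1/pt) := by
    rw [MeasureTheory.eLpNorm_eq_lintegral_rpow_enorm_toReal (by positivity : p ≠ 0) hptop]
    congr 1
    rw [MeasureTheory.ofReal_integral_eq_lintegral_ofReal hgi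
      (Filter.Eventually.of_forall fun t => by positivity)]
    refine lintegral_congr fun t => ?_
    rw [← ENNReal.ofReal_rpow_of_nonneg (norm_nonneg _) hpt0.le, ofReal_norm]
  have hμuniv : μ Set.univ = ENNReal.ofReal (2*π) := by
    rw [hμ, Measure.restrict_apply_univ, Real.volume_Ioc]
    norm_num
  rw [h1, h2, hμuniv] at key
  have hexp : 1 / (1:ℝ≥0∞).toReal - 1/p.toReal = 1 - 1/pt := by
    rw [ENNReal.toReal_one, ← hpt]
    norm_num
  rw [hexp] at key
  -- take toReal
  have hX0 : 0 ≤ ∫ t, ‖f t‖ ^ pt ∂μ := integral_nonneg fun t => by positivity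
  have hI0 : 0 ≤ ∫ t, ‖f t‖ ∂μ := integral_nonneg fun t => norm_nonneg _
  have hrhs_ne_top : ENNReal.ofReal (∫ t, ‖f t‖ ^ pt ∂μ) ^ (1/pt)
      * ENNReal.ofReal (2*π) ^ (1 - 1/pt) ≠ ⊤ := by
    apply ENNReal.mul_ne_top
    · exact ENNReal.rpow_ne_top_of_nonneg (by positivity) ENNReal.ofReal_ne_top
    · exact ENNReal.rpow_ne_top_of_nonneg
        (sub_nonneg.mpr ((div_le_one hpt0).mpr hpt1)) ENNReal.ofReal_ne_top
  have key' : (∫ t, ‖f t‖ ∂μ)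
      ≤ (∫ t, ‖f t‖ ^ pt ∂μ) ^ (1/pt) * (2*π) ^ (1 - 1/pt) := by
    have := ENNReal.toReal_mono hrhs_ne_top key
    rwa [ENNReal.toReal_ofReal hI0, ENNReal.toReal_mul, ← ENNReal.toReal_rpow,
      ← ENNReal.toReal_rpow, ENNReal.toReal_ofReal hX0, ENNReal.toReal_ofReal h2π] at this
  rw [Mp, if_neg hptop]
  have hset : (∫ t in (0:ℝ)..(2*π), ‖f t‖) = ∫ t, ‖f t‖ ∂μ :=
    intervalIntegral.integral_of_le h2π
  have hset2 : (∫ t in (0:ℝ)..(2*π), ‖f t‖ ^ pt) = ∫ t, ‖f t‖ ^ pt ∂μ :=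
    intervalIntegral.integral_of_le h2π
  rw [hset, hset2]
  calc (1/(2*π)) * ∫ t, ‖f t‖ ∂μ
      ≤ (1/(2*π)) * ((∫ t, ‖f t‖ ^ pt ∂μ) ^ (1/pt) * (2*π) ^ (1 - 1/pt)) :=
        mul_le_mul_of_nonneg_left key' (by positivity)
    _ = (1/(2*π) * ∫ t, ‖f t‖ ^ pt ∂μ) ^ (1/pt) := by
        rw [Real.mul_rpow (by positivity) hX0]
        rw [show (1/(2*π)) ^ (1/pt) = (2*π) ^ (-(1/pt)) by
          rw [one_div, Real.inv_rpow h2π, ← Real.rpow_neg h2π]]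
        rw [show (1/(2*π)) = (2*π) ^ (-1 : ℝ) by
          rw [Real.rpow_neg_one]; ring]
        rw [mul_comm ((∫ t, ‖f t‖ ^ pt ∂μ) ^ (1/pt)) ((2*π) ^ (1 - 1/pt)), ← mul_assoc,
          ← Real.rpow_add h2π', show (-1 : ℝ) + (1 - 1/pt) = -(1/pt) by ring]

lemma Tshift_iterate (α : ℝ) (a : ℕ → ℂ) (n k : ℕ) :
    (Tshift α)^[n] a k = a (k + n) * (((((k:ℝ) + n + 1) / ((k:ℝ) + 1)) ^ α : ℝ) : ℂ) := by
  induction n generalizing a with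
  | zero =>
      simp [div_self (by positivity : ((k:ℝ)+1) ≠ 0)]
  | succ n ih =>
      rw [Function.iterate_succ_apply, ih, Tshift]
      have hx : (0:ℝ) ≤ 1 + 1 / (((k+n:ℕ):ℝ) + 1) := by positivity
      have hy : (0:ℝ) ≤ ((k:ℝ) + n + 1) / ((k:ℝ) + 1) := by positivity
      rw [mul_assoc, ← Complex.ofReal_mul, ← Real.mul_rpow hx hy]
      have hidx : k + n + 1 = k + (n + 1) := by omega
      rw [hidx]
      congr 2
      have h1 : ((k:ℝ) + 1) ≠ 0 := by positivity
      have h2 : (((k+n:ℕ):ℝ) + 1) ≠ 0 := by positivity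
      push_cast
      push_cast at h2
      field_simp
      ring

lemma sumFn_zero (c : ℕ → ℂ) : sumFn c 0 = c 0 := by
  rw [sumFn, tsum_eq_single 0]
  · simp
  · intro k hk
    simp [zero_pow hk]

lemma coeff_le_Mp (a : ℕ → ℂ) (ha : InHD a) (p : ℝ≥0∞) (hp : 1 ≤ p)
    {r : ℝ} (hr0 : 0 ≤ r) (hr1 : r < 1) (n : ℕ) :
    ‖a n‖ * r ^ n ≤ Mp p a r := by
  refine le_trans (coeff_le_M1 a ha hr0 hr1 n) ?_
  by_cases hptop : p = ∞
  · subst hptop; exact M1_le_Minf a ha hr0 hr1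
  · exact M1_le_Mp a ha hr0 hr1 p hp hptop

lemma pow_lower (n : ℕ) : (1:ℝ)/9 ≤ (((n:ℝ)+1)/((n:ℝ)+2)) ^ n := by
  have h1 : (0:ℝ) < (n:ℝ)+1 := by positivity
  have h2 : (0:ℝ) < (n:ℝ)+2 := by positivity
  set x : ℝ := ((n:ℝ)+1)/((n:ℝ)+2) with hx
  have hx0 : 0 < x := by positivity
  have hx1 : x ≤ 1 := by
    rw [hx, div_le_one h2]; linarith
  have step1 : x ^ (n+2) ≤ x ^ n := pow_le_pow_of_le_one hx0.le hx1 (by omega)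
  refine le_trans ?_ step1
  have hinv : x ^ (n+2) = (((((n:ℝ)+2)/((n:ℝ)+1))) ^ (n+2))⁻¹ := by
    rw [hx, ← inv_pow, ← inv_div]
  rw [hinv]
  rw [show (1:ℝ)/9 = (9:ℝ)⁻¹ by norm_num]
  apply inv_anti₀
  · positivity
  · -- ((n+2)/(n+1))^(n+2) ≤ 9
    have hb : ((n:ℝ)+2)/((n:ℝ)+1) = 1 + 1/((n:ℝ)+1) := by
      field_simp
      ring
    have hexp : (1 + 1/((n:ℝ)+1)) ^ (n+2) ≤ Real.exp ((n+2) * (1/((n:ℝ)+1))) := by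
      rw [show ((n:ℝ)+2) * (1/((n:ℝ)+1)) = ((n+2 : ℕ):ℝ) * (1/((n:ℝ)+1)) by push_cast; ring,
        Real.exp_nat_mul]
      apply pow_le_pow_left₀ (by positivity)
      rw [add_comm]
      exact Real.add_one_le_exp _
    rw [hb]
    refine le_trans hexp ?_
    have harg : ((n:ℝ)+2) * (1/((n:ℝ)+1)) ≤ 2 := by
      push_cast
      rw [mul_one_div, div_le_iff₀ h1]
      linarith
    refine le_trans (Real.exp_le_exp.mpr harg) ?_
    have := Real.exp_one_lt_d9
    have h9 : Real.exp 2 = Real.exp 1 * Real.exp 1 := by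
      rw [← Real.exp_add]; norm_num
    nlinarith [Real.exp_pos 1]


end HelperLemmas

/-- Theorem 2.2 (1b): for `α ≤ 0` and `1 ≤ p ≤ ∞`, no hypercyclic function for `T_α`
satisfies `M_p(f,r) ≤ C (1-r)^α` on `(0,1)` for some constant `C > 0`. -/
theorem stmt1 (α : ℝ) (hα : α ≤ 0) (p : ℝ≥0∞) (hp : 1 ≤ p) :
    ¬ ∃ a : ℕ → ℂ, InHD a ∧ Hypercyclic α a ∧
      ∃ C : ℝ, 0 < C ∧ ∀ r ∈ Set.Ioo (0:ℝ) 1, Mp p a r ≤ C * (1 - r) ^ α := by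
  rintro ⟨a, ha, hhc, C, hC, hM⟩
  set B : ℝ := 9 * C * 2 ^ (-α) with hB
  have h2pos : (0:ℝ) < 2 ^ (-α) := Real.rpow_pos_of_pos two_pos _
  have hB0 : 0 < B := by rw [hB]; positivity
  have hbound : ∀ n : ℕ, ‖a n‖ * ((n:ℝ)+1) ^ α ≤ B := by
    intro n
    have hn1 : (0:ℝ) < (n:ℝ)+1 := by positivity
    have hn2 : (0:ℝ) < (n:ℝ)+2 := by positivity
    set r : ℝ := ((n:ℝ)+1)/((n:ℝ)+2) with hr
    have hrI : r ∈ Set.Ioo (0:ℝ) 1 := by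
      constructor
      · positivity
      · rw [hr, div_lt_one hn2]; linarith
    have h1 : ‖a n‖ * r ^ n ≤ C * (1 - r) ^ α :=
      le_trans (coeff_le_Mp a ha p hp hrI.1.le hrI.2 n) (hM r hrI)
    have h1r : 1 - r = 1/((n:ℝ)+2) := by
      rw [hr]; field_simp; norm_num
    rw [h1r] at h1
    have h2 : ‖a n‖ ≤ 9 * (C * ((1:ℝ)/((n:ℝ)+2)) ^ α) := by
      have hpl := pow_lower n
      have h9 : ‖a n‖ * (1/9 : ℝ) ≤ C * ((1:ℝ)/((n:ℝ)+2)) ^ α :=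
        le_trans (mul_le_mul_of_nonneg_left hpl (norm_nonneg _)) h1
      linarith
    have hrp : (0:ℝ) ≤ ((n:ℝ)+1) ^ α := Real.rpow_nonneg hn1.le _
    calc ‖a n‖ * ((n:ℝ)+1)^α
        ≤ (9 * (C * ((1:ℝ)/((n:ℝ)+2))^α)) * ((n:ℝ)+1)^α :=
          mul_le_mul_of_nonneg_right h2 hrp
      _ = 9 * C * ((((n:ℝ)+1)/((n:ℝ)+2))^α) := by
          rw [mul_assoc, mul_assoc, ← Real.mul_rpow (by positivity) hn1.le,
            one_div, inv_mul_eq_div, ← mul_assoc]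
      _ ≤ B := by
          rw [hB]
          apply mul_le_mul_of_nonneg_left _ (by positivity)
          have hhalf : (1:ℝ)/2 ≤ ((n:ℝ)+1)/((n:ℝ)+2) := by
            rw [div_le_div_iff₀ (by norm_num) hn2]; linarith
          have := Real.rpow_le_rpow_of_nonpos (by norm_num : (0:ℝ) < 1/2) hhalf hα
          rwa [show ((1:ℝ)/2) ^ α = (2:ℝ) ^ (-α) by
            rw [one_div, Real.inv_rpow (by norm_num), ← Real.rpow_neg (by norm_num)]] at this
  -- contradiction with hypercyclicity
  set b : ℕ → ℂ := fun k => if k = 0 then ((B+2 : ℝ) : ℂ) else 0 with hb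
  have hbH : InHD b := by
    intro r hr0 hr1
    apply summable_of_ne_finset_zero (s := ({0} : Finset ℕ))
    intro k hk
    simp only [Finset.mem_singleton] at hk
    simp [hb, if_neg hk]
  obtain ⟨n, hn⟩ := hhc b hbH {0} isCompact_singleton
    (by intro z hz; simp only [Set.mem_singleton_iff] at hz; subst hz
        simp [Metric.mem_ball]) 1 one_pos
  have h0 := hn 0 rfl
  rw [sumFn_zero, sumFn_zero] at h0
  have hT : (Tshift α)^[n] a 0 = a n * ((((n:ℝ)+1) ^ α : ℝ) : ℂ) := by
    rw [Tshift_iterate]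
    norm_num
  have hnorm : ‖(Tshift α)^[n] a 0‖ = ‖a n‖ * ((n:ℝ)+1)^α := by
    rw [hT, norm_mul, Complex.norm_real,
      Real.norm_of_nonneg (Real.rpow_nonneg (by positivity) _)]
  have hb0 : ‖b 0‖ = B + 2 := by
    have : b 0 = ((B+2:ℝ):ℂ) := by rw [hb]; simp
    rw [this, Complex.norm_real, Real.norm_of_nonneg (by linarith)]
  have htri : ‖b 0‖ - ‖(Tshift α)^[n] a 0‖ ≤ ‖(Tshift α)^[n] a 0 - b 0‖ := by
    rw [norm_sub_rev]
    exact norm_sub_norm_le _ _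
  have := hbound n
  rw [hnorm] at htri
  rw [hb0] at htri
  linarith
end

section
/- Let α > 0 and 1 ≤ p ≤ ∞. For any function φ : [0,1) → ℝ₊ with φ(r) → 0 as r → 1⁻, there is no function f ∈ H(𝔻) hypercyclic for T_α satisfying M_p(f,r) ≤ φ(r) for all 0 < r < 1. -/
open Filter Set MeasureTheory
open scoped Topology ENNReal Real Classical

section Aux

private lemma hpi2 : (0:ℝ) < 2 * π := by positivity

private lemma norm_circle (r t : ℝ) (hr : 0 ≤ r) :
    ‖(↑r * Complex.exp (Complex.I * ↑t))‖ = r := by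
  simp [Complex.norm_exp, abs_of_nonneg hr]

private lemma g_cont (a : ℕ → ℂ) (ha : InHD a) (r : ℝ) (hr0 : 0 ≤ r) (hr1 : r < 1) :
    Continuous fun t : ℝ => sumFn a (↑r * Complex.exp (Complex.I * ↑t)) := by
  apply continuous_tsum (f := fun (j : ℕ) (t : ℝ) => a j * (↑r * Complex.exp (Complex.I * ↑t)) ^ j)
    (fun j => by continuity) (ha r hr0 hr1)
  intro j t
  rw [norm_mul, norm_pow, norm_circle r t hr0]

private lemma coeff_bound (a : ℕ → ℂ) (ha : InHD a) (r : ℝ) (hr0 : 0 ≤ r) (hr1 : r < 1) (k : ℕ) :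
    ‖a k‖ * r ^ k * (2 * π) ≤
      ∫ t in Set.Ioc (0:ℝ) (2*π), ‖sumFn a (↑r * Complex.exp (Complex.I * ↑t))‖ := by
  have hπ : (0:ℝ) < 2 * π := hpi2
  set μ := (volume : Measure ℝ).restrict (Set.Ioc (0:ℝ) (2*π)) with hμ
  set F : ℕ → ℝ → ℂ := fun j t =>
    (a j * (↑r * Complex.exp (Complex.I * ↑t)) ^ j) * Complex.exp (-(Complex.I * k * t)) with hF
  have hFc : ∀ j, Continuous (F j) := fun j => by continuity
  have hFnorm : ∀ j t, ‖F j t‖ = ‖a j‖ * r ^ j := by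
    intro j t
    rw [hF]
    simp only
    rw [norm_mul, norm_mul, norm_pow, norm_circle r t hr0]
    have : ‖Complex.exp (-(Complex.I * ↑k * ↑t))‖ = 1 := by
      simp [Complex.norm_exp]
    rw [this, mul_one]
  have hFint : ∀ j, Integrable (F j) μ := by
    intro j
    rw [hμ]
    have h2 : IntegrableOn (F j) (Set.Ioc (0:ℝ) (2*π)) volume := (hFc j).integrableOn_Ioc
    exact h2
  have hInorm : ∀ j, ∫ t, ‖F j t‖ ∂μ = ‖a j‖ * r ^ j * (2 * π) := by
    intro j
    have : (fun t => ‖F j t‖) = fun _ => ‖a j‖ * r ^ j := funext (hFnorm j)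
    rw [this, hμ, setIntegral_const, measureReal_def, Real.volume_Ioc, sub_zero,
      ENNReal.toReal_ofReal hπ.le, smul_eq_mul, mul_comm]
  have hFsum : Summable fun j => ∫ t, ‖F j t‖ ∂μ := by
    simp_rw [hInorm]
    exact (ha r hr0 hr1).mul_right _
  have hswap := MeasureTheory.integral_tsum_of_summable_integral_norm hFint hFsum
  have hpt : ∀ t : ℝ, (∑' j, F j t) =
      sumFn a (↑r * Complex.exp (Complex.I * ↑t)) * Complex.exp (-(Complex.I * k * t)) := by
    intro t
    rw [sumFn, tsum_mul_right]
  have hIj : ∀ j, (∫ t, F j t ∂μ) =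
      if j = k then (2 * π : ℝ) • (a k * (r:ℂ) ^ k) else 0 := by
    intro j
    have hrw : ∀ t : ℝ, F j t = (a j * (r:ℂ) ^ j) *
        Complex.exp ((((j:ℤ) - (k:ℤ) : ℤ) : ℂ) * Complex.I * t) := by
      intro t
      rw [hF]
      simp only
      rw [mul_pow, ← Complex.exp_nat_mul, ← mul_assoc, mul_comm (a j) ((r:ℂ)^j),
        mul_assoc, mul_assoc, ← Complex.exp_add]
      ring_nf
      push_cast
      ring_nf
    simp_rw [hrw]
    by_cases hjk : j = k
    · subst hjk
      rw [if_pos rfl]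
      simp only [sub_self, Int.cast_zero, zero_mul, Complex.exp_zero, mul_one]
      rw [hμ, setIntegral_const, measureReal_def, Real.volume_Ioc, sub_zero, ENNReal.toReal_ofReal hπ.le]
    · rw [if_neg hjk]
      set c : ℂ := (((j:ℤ) - (k:ℤ) : ℤ) : ℂ) * Complex.I with hc
      have hc0 : c ≠ 0 := by
        apply mul_ne_zero _ Complex.I_ne_zero
        simp only [ne_eq, Int.cast_eq_zero, sub_eq_zero]
        exact_mod_cast fun h => hjk (by exact_mod_cast h)
      rw [MeasureTheory.integral_const_mul]
      have : (∫ t in Set.Ioc (0:ℝ) (2*π), Complex.exp (c * t)) = 0 := by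
        rw [← intervalIntegral.integral_of_le (by linarith)]
        rw [integral_exp_mul_complex hc0]
        have h1 : Complex.exp (c * (2*π:ℝ)) = 1 := by
          rw [hc]
          have : (((j:ℤ) - (k:ℤ) : ℤ) : ℂ) * Complex.I * ((2*π:ℝ):ℂ) =
              (((j:ℤ) - (k:ℤ) : ℤ) : ℂ) * (2 * π * Complex.I) := by push_cast; ring
          rw [this, Complex.exp_int_mul_two_pi_mul_I]
        rw [h1]
        simp
      rw [hμ, this, mul_zero]
  have hsum : (∑' j, ∫ t, F j t ∂μ) = (2 * π : ℝ) • (a k * (r:ℂ) ^ k) := by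
    rw [tsum_eq_single k]
    · rw [hIj k, if_pos rfl]
    · intro j hj; rw [hIj j, if_neg hj]
  have hkey : (2 * π : ℝ) • (a k * (r:ℂ) ^ k) =
      ∫ t, sumFn a (↑r * Complex.exp (Complex.I * ↑t)) * Complex.exp (-(Complex.I * k * t)) ∂μ := by
    rw [← hsum, hswap]
    congr 1
    exact funext hpt
  have hnorm1 : ‖(2 * π : ℝ) • (a k * (r:ℂ) ^ k)‖ = ‖a k‖ * r ^ k * (2 * π) := by
    rw [norm_smul, Real.norm_of_nonneg hπ.le, norm_mul, norm_pow, Complex.norm_real,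
      Real.norm_of_nonneg hr0]
    ring
  calc ‖a k‖ * r ^ k * (2 * π) = ‖(2 * π : ℝ) • (a k * (r:ℂ) ^ k)‖ := hnorm1.symm
    _ = ‖∫ t, sumFn a (↑r * Complex.exp (Complex.I * ↑t)) *
          Complex.exp (-(Complex.I * k * t)) ∂μ‖ := by rw [hkey]
    _ ≤ ∫ t, ‖sumFn a (↑r * Complex.exp (Complex.I * ↑t)) *
          Complex.exp (-(Complex.I * k * t))‖ ∂μ := norm_integral_le_integral_norm _
    _ = ∫ t in Set.Ioc (0:ℝ) (2*π), ‖sumFn a (↑r * Complex.exp (Complex.I * ↑t))‖ := by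
        rw [hμ]
        congr 1
        funext t
        rw [norm_mul]
        have : ‖Complex.exp (-(Complex.I * ↑k * ↑t))‖ = 1 := by
          simp [Complex.norm_exp]
        rw [this, mul_one]

private lemma key_ineq (x ε P : ℝ) (hx : 0 ≤ x) (hε : 0 < ε) (hP : 1 ≤ P) :
    x ≤ ε + ε ^ (1 - P) * x ^ P := by
  rcases le_or_gt x ε with h | h
  · have h2 : 0 ≤ ε ^ (1-P) * x ^ P :=
      mul_nonneg (Real.rpow_nonneg hε.le _) (Real.rpow_nonneg hx _)
    linarith
  · have hx0 : 0 < x := hε.trans h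
    have h1 : 1 ≤ (x / ε) ^ (P - 1) := by
      calc (1:ℝ) = (1:ℝ) ^ (P-1) := (Real.one_rpow _).symm
        _ ≤ (x/ε) ^ (P-1) :=
          Real.rpow_le_rpow zero_le_one ((one_le_div hε).2 h.le) (by linarith)
    have e1 : ε ^ (1-P) * x ^ P = (x/ε) ^ (P-1) * x := by
      rw [Real.div_rpow hx0.le hε.le]
      have hxP : x ^ P = x ^ (P-1) * x := by
        nth_rewrite 1 [show P = (P-1) + 1 by ring]
        rw [Real.rpow_add hx0, Real.rpow_one]
      rw [hxP, show (1-P) = -(P-1) by ring, Real.rpow_neg hε.le]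
      ring
    rw [e1]
    nlinarith [h1, hx0.le]

end Aux

/-- Theorem 2.2 (2b): for `α > 0` and `1 ≤ p ≤ ∞`, if `φ(r) → 0` as `r → 1⁻`, then no
hypercyclic function for `T_α` satisfies `M_p(f,r) ≤ φ(r)` on `(0,1)`. -/
theorem stmt3 (α : ℝ) (hα : 0 < α) (p : ℝ≥0∞) (hp : 1 ≤ p)
    (φ : ℝ → ℝ) (hφ0 : ∀ r ∈ Set.Ico (0:ℝ) 1, 0 ≤ φ r)
    (hφ : Tendsto φ (nhdsWithin 1 (Set.Iio (1:ℝ))) (nhds 0)) :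
    ¬ ∃ a : ℕ → ℂ, InHD a ∧ Hypercyclic α a ∧
      ∀ r ∈ Set.Ioo (0:ℝ) 1, Mp p a r ≤ φ r := by
  rintro ⟨a, ha, hhc, hbnd⟩
  have hπ : (0:ℝ) < 2 * π := hpi2
  set l : Filter ℝ := nhdsWithin 1 (Set.Ioo (0:ℝ) 1) with hl
  haveI hlne : l.NeBot := right_nhdsWithin_Ioo_neBot (by norm_num)
  have hφl : Tendsto φ l (𝓝 0) :=
    hφ.mono_left (nhdsWithin_mono 1 (fun x hx => hx.2))
  -- all Taylor coefficients of `a` vanish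
  have hak : ∀ k, a k = 0 := by
    intro k
    -- basic coefficient bound
    have hcb : ∀ r ∈ Set.Ioo (0:ℝ) 1, ‖a k‖ * r ^ k ≤
        (1/(2*π)) * ∫ t in Set.Ioc (0:ℝ) (2*π),
          ‖sumFn a (↑r * Complex.exp (Complex.I * ↑t))‖ := by
      intro r hr
      have h0 := coeff_bound a ha r hr.1.le hr.2 k
      rw [one_div, inv_mul_eq_div]
      exact (le_div_iff₀ hπ).mpr h0
    have hLHS : Tendsto (fun r : ℝ => ‖a k‖ * r ^ k) l (𝓝 (‖a k‖)) := by
      have h1 : Tendsto (fun r : ℝ => ‖a k‖ * r ^ k) (𝓝 1) (𝓝 (‖a k‖ * 1 ^ k)) :=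
        tendsto_const_nhds.mul ((continuous_pow k).tendsto 1)
      rw [one_pow, mul_one] at h1
      exact h1.mono_left nhdsWithin_le_nhds
    have hak0 : ‖a k‖ ≤ 0 := by
      by_cases hptop : p = ∞
      · -- sup case : `M_p` bounds the mean of `‖f‖`
        have hineq : ∀ r ∈ Set.Ioo (0:ℝ) 1, ‖a k‖ * r ^ k ≤ φ r := by
          intro r hr
          refine (hcb r hr).trans (le_trans ?_ (hbnd r hr))
          have hgc := (g_cont a ha r hr.1.le hr.2).norm
          set g := fun t : ℝ => ‖sumFn a (↑r * Complex.exp (Complex.I * ↑t))‖ with hg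
          have hbdd : BddAbove (g '' Set.Icc 0 (2*π)) :=
            (isCompact_Icc.image hgc).bddAbove
          set M := sSup (g '' Set.Icc 0 (2*π)) with hM
          have hub : ∀ t ∈ Set.Ioc (0:ℝ) (2*π), g t ≤ M := fun t ht =>
            le_csSup hbdd ⟨t, Set.Ioc_subset_Icc_self ht, rfl⟩
          have hint : (∫ t in Set.Ioc (0:ℝ) (2*π), g t) ≤ (2*π) * M := by
            have h1 : IntegrableOn g (Set.Ioc (0:ℝ) (2*π)) volume := hgc.integrableOn_Ioc
            calc (∫ t in Set.Ioc (0:ℝ) (2*π), g t)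
                ≤ ∫ _t in Set.Ioc (0:ℝ) (2*π), M :=
                  setIntegral_mono_on h1 (integrableOn_const measure_Ioc_lt_top.ne)
                    measurableSet_Ioc hub
              _ = (2*π) * M := by
                  rw [setIntegral_const, measureReal_def, Real.volume_Ioc, sub_zero,
                    ENNReal.toReal_ofReal hπ.le, smul_eq_mul]
          have hMp : Mp p a r = M := by rw [Mp, if_pos hptop]
          rw [hMp]
          calc (1/(2*π)) * ∫ t in Set.Ioc (0:ℝ) (2*π), g t
              ≤ (1/(2*π)) * ((2*π) * M) :=
                mul_le_mul_of_nonneg_left hint (by positivity)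
            _ = M := by field_simp
        have hev : (fun r : ℝ => ‖a k‖ * r ^ k) ≤ᶠ[l] φ := by
          filter_upwards [self_mem_nhdsWithin] with r hr using hineq r hr
        exact le_of_tendsto_of_tendsto hLHS hφl hev
      · -- finite exponent case
        set P := p.toReal with hPdef
        have hP1 : (1:ℝ) ≤ P := by
          have h2 := ENNReal.toReal_mono hptop hp
          simpa using h2
        have hP0 : (0:ℝ) < P := lt_of_lt_of_le one_pos hP1
        -- for each ε > 0, `‖a k‖ ≤ ε`
        have heps : ∀ ε : ℝ, 0 < ε → ‖a k‖ ≤ ε := by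
          intro ε hε
          have hineq : ∀ r ∈ Set.Ioo (0:ℝ) 1, ‖a k‖ * r ^ k ≤
              ε + ε ^ (1 - P) * (φ r) ^ P := by
            intro r hr
            refine (hcb r hr).trans ?_
            have hgc := (g_cont a ha r hr.1.le hr.2).norm
            set g := fun t : ℝ => ‖sumFn a (↑r * Complex.exp (Complex.I * ↑t))‖ with hg
            have hgnn : ∀ t, 0 ≤ g t := fun t => norm_nonneg _
            have hgint : IntegrableOn g (Set.Ioc (0:ℝ) (2*π)) volume := hgc.integrableOn_Ioc
            have hgPc : Continuous fun t => g t ^ P :=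
              hgc.rpow_const (fun t => Or.inr hP0.le)
            have hgPint : IntegrableOn (fun t => g t ^ P) (Set.Ioc (0:ℝ) (2*π)) volume :=
              hgPc.integrableOn_Ioc
            set B := ∫ t in Set.Ioc (0:ℝ) (2*π), g t ^ P with hB
            have hBnn : 0 ≤ B :=
              setIntegral_nonneg measurableSet_Ioc (fun t _ => Real.rpow_nonneg (hgnn t) _)
            have h1 : (∫ t in Set.Ioc (0:ℝ) (2*π), g t) ≤ 2*π*ε + ε ^ (1-P) * B := by
              have hsum_int : IntegrableOn (fun t => ε + ε ^ (1-P) * g t ^ P)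
                  (Set.Ioc (0:ℝ) (2*π)) volume :=
                (integrableOn_const measure_Ioc_lt_top.ne).add (hgPint.const_mul _)
              calc (∫ t in Set.Ioc (0:ℝ) (2*π), g t)
                  ≤ ∫ t in Set.Ioc (0:ℝ) (2*π), (ε + ε ^ (1-P) * g t ^ P) :=
                    setIntegral_mono_on hgint hsum_int measurableSet_Ioc
                      (fun t _ => key_ineq (g t) ε P (hgnn t) hε hP1)
                _ = 2*π*ε + ε ^ (1-P) * B := by
                    rw [MeasureTheory.integral_add
                      (show Integrable (fun _ : ℝ => ε) (volume.restrict (Set.Ioc (0:ℝ) (2*π))) from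
                        integrableOn_const measure_Ioc_lt_top.ne) (hgPint.const_mul _),
                      MeasureTheory.integral_const_mul, setIntegral_const, measureReal_def, Real.volume_Ioc,
                      sub_zero, ENNReal.toReal_ofReal hπ.le, smul_eq_mul, hB]
            -- relate `B` to `M_p` and `φ`
            have hS : (1/(2*π)) * B ≤ (φ r) ^ P := by
              set S := (1/(2*π)) * B with hSdef
              have hSnn : 0 ≤ S := by positivity
              have hMp : Mp p a r = S ^ (1/P) := by
                rw [Mp, if_neg hptop, intervalIntegral.integral_of_le hπ.le]
              have hMpnn : 0 ≤ Mp p a r := hMp ▸ Real.rpow_nonneg hSnn _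
              have hSeq : S = (Mp p a r) ^ P := by
                rw [hMp, ← Real.rpow_mul hSnn, one_div, inv_mul_cancel₀ hP0.ne',
                  Real.rpow_one]
              rw [hSeq]
              exact Real.rpow_le_rpow hMpnn (hbnd r hr) hP0.le
            calc (1/(2*π)) * ∫ t in Set.Ioc (0:ℝ) (2*π), g t
                ≤ (1/(2*π)) * (2*π*ε + ε ^ (1-P) * B) :=
                  mul_le_mul_of_nonneg_left h1 (by positivity)
              _ = ε + ε ^ (1-P) * ((1/(2*π)) * B) := by field_simp
              _ ≤ ε + ε ^ (1-P) * (φ r) ^ P :=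
                  add_le_add le_rfl (mul_le_mul_of_nonneg_left hS
                    (Real.rpow_nonneg hε.le _))
          have hRHS : Tendsto (fun r : ℝ => ε + ε ^ (1-P) * (φ r) ^ P) l
              (𝓝 (ε + ε ^ (1-P) * 0)) := by
            have hcont : ContinuousAt (fun x : ℝ => x ^ P) 0 :=
              Real.continuousAt_rpow_const 0 P (Or.inr hP0.le)
            have hφP : Tendsto (fun r : ℝ => (φ r) ^ P) l (𝓝 ((0:ℝ) ^ P)) :=
              hcont.tendsto.comp hφl
            rw [Real.zero_rpow hP0.ne'] at hφP
            exact tendsto_const_nhds.add (tendsto_const_nhds.mul hφP)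
          rw [mul_zero, add_zero] at hRHS
          have hev : (fun r : ℝ => ‖a k‖ * r ^ k) ≤ᶠ[l]
              (fun r : ℝ => ε + ε ^ (1-P) * (φ r) ^ P) := by
            filter_upwards [self_mem_nhdsWithin] with r hr using hineq r hr
          exact le_of_tendsto_of_tendsto hLHS hRHS hev
        by_contra hcon
        push_neg at hcon
        have := heps (‖a k‖ / 2) (by linarith)
        linarith
    exact norm_le_zero_iff.mp hak0
  -- `a = 0`, contradiction with hypercyclicity
  have ha0 : a = fun _ => (0:ℂ) := funext hak
  set b : ℕ → ℂ := fun n => if n = 0 then 1 else 0 with hbdef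
  have hbHD : InHD b := by
    intro r hr0 hr1
    apply summable_of_ne_finset_zero (s := {0})
    intro k hk
    simp only [Finset.mem_singleton] at hk
    simp [hbdef, hk]
  obtain ⟨n, hn⟩ := hhc b hbHD {0} isCompact_singleton
    (by simp [Metric.mem_ball]) (1/2) (by norm_num)
  have h0 := hn 0 rfl
  have hiter : (Tshift α)^[n] a = a := by
    apply Function.iterate_fixed
    funext k
    simp [Tshift, ha0]
  rw [hiter] at h0
  have hs1 : sumFn a 0 = 0 := by
    simp [sumFn, ha0]
  have hs2 : sumFn b 0 = 1 := by
    rw [sumFn]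
    rw [tsum_eq_single 0]
    · simp [hbdef]
    · intro j hj
      simp [hbdef, hj, zero_pow hj]
  rw [hs1, hs2] at h0
  norm_num at h0
end

section
/- Let N ∈ ℕ and let A_N be a subset of {1,…,N}. If γ ≥ 0, then ∑_{k∈A_N} (k+1)^γ ≥ ((#A_N + 1)^{γ+1} − 1)/(γ+1). If γ < 0 and γ ≠ −1, then ∑_{k∈A_N} (k+1)^γ ≥ ((N+2)^{γ+1}/(γ+1))·(1 − (1 − #A_N/(N+2))^{γ+1}). -/
open Filter Set MeasureTheory
open scoped Topology ENNReal Real Classical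

lemma step_mono {γ b : ℝ} (hb : 0 < b) (hγ : 0 ≤ γ) :
    ((b + 1) ^ (γ + 1) - b ^ (γ + 1)) / (γ + 1) ≤ (b + 1) ^ γ := by
  have h0 : (0:ℝ) ∉ Set.uIcc b (b+1) := by
    rw [Set.uIcc_of_le (by linarith)]
    intro h; exact absurd (Set.mem_Icc.1 h).1 (by linarith)
  rw [← integral_rpow (Or.inl (by linarith))]
  have := intervalIntegral.integral_mono_on (f := fun x : ℝ => x ^ γ)
    (g := fun _ : ℝ => (b+1) ^ γ) (μ := MeasureTheory.volume) (by linarith)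
    (intervalIntegral.intervalIntegrable_rpow (Or.inr h0))
    (intervalIntegrable_const)
    (fun x hx => Real.rpow_le_rpow (by linarith [(Set.mem_Icc.1 hx).1]) (Set.mem_Icc.1 hx).2 hγ)
  simpa using this

lemma step_anti {γ b : ℝ} (hb : 0 < b) (hγ : γ < 0) (hγ' : γ ≠ -1) :
    ((b + 1) ^ (γ + 1) - b ^ (γ + 1)) / (γ + 1) ≤ b ^ γ := by
  have h0 : (0:ℝ) ∉ Set.uIcc b (b+1) := by
    rw [Set.uIcc_of_le (by linarith)]
    intro h; exact absurd (Set.mem_Icc.1 h).1 (by linarith)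
  rw [← integral_rpow (Or.inr ⟨hγ', h0⟩)]
  have := intervalIntegral.integral_mono_on (f := fun x : ℝ => x ^ γ)
    (g := fun _ : ℝ => b ^ γ) (μ := MeasureTheory.volume) (by linarith)
    (intervalIntegral.intervalIntegrable_rpow (Or.inr h0))
    (intervalIntegrable_const)
    (fun x hx => Real.rpow_le_rpow_of_nonpos hb (Set.mem_Icc.1 hx).1 hγ.le)
  simpa using this

lemma helper1 {γ : ℝ} (hγ : 0 ≤ γ) :
    ∀ m (A : Finset ℕ), (∀ k ∈ A, 1 ≤ k) → A.card = m →
      (((m:ℝ) + 1) ^ (γ + 1) - 1) / (γ + 1) ≤ ∑ k ∈ A, ((k : ℝ) + 1) ^ γ := by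
  intro m
  induction m with
  | zero =>
    intro A h1 hcard
    rw [Finset.card_eq_zero.1 hcard]
    simp [Real.one_rpow]
  | succ m ih =>
    intro A h1 hcard
    have hne : A.Nonempty := Finset.card_pos.1 (by omega)
    set a := A.max' hne with ha
    have haA : a ∈ A := A.max'_mem hne
    have hsub : A ⊆ Finset.Icc 1 a := fun k hk =>
      Finset.mem_Icc.2 ⟨h1 k hk, A.le_max' k hk⟩
    have hma : m + 1 ≤ a := by
      have := Finset.card_le_card hsub
      rw [hcard, Nat.card_Icc] at this; omega
    have hcard' : (A.erase a).card = m := by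
      rw [Finset.card_erase_of_mem haA, hcard]
      omega
    have hIH := ih (A.erase a) (fun k hk => h1 k (Finset.mem_of_mem_erase hk)) hcard'
    have hstep : (((m:ℝ)+2) ^ (γ+1) - ((m:ℝ)+1) ^ (γ+1)) / (γ+1) ≤ ((m:ℝ)+2) ^ γ := by
      have := step_mono (b := (m:ℝ)+1) (by positivity) hγ
      have h2 : ((m:ℝ)+1)+1 = (m:ℝ)+2 := by ring
      rwa [h2] at this
    have hmono : ((m:ℝ)+2) ^ γ ≤ ((a:ℝ)+1) ^ γ := by
      apply Real.rpow_le_rpow (by positivity) _ hγ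
      have : ((m:ℝ)+1) ≤ (a:ℝ) := by exact_mod_cast hma
      linarith
    have hsum : ∑ k ∈ A.erase a, ((k : ℝ) + 1) ^ γ + ((a:ℝ)+1) ^ γ
        = ∑ k ∈ A, ((k : ℝ) + 1) ^ γ :=
      Finset.sum_erase_add A _ haA
    have hkey : (((m:ℝ)+2) ^ (γ+1) - 1) / (γ+1)
        = (((m:ℝ)+2) ^ (γ+1) - ((m:ℝ)+1) ^ (γ+1)) / (γ+1)
          + (((m:ℝ)+1) ^ (γ+1) - 1) / (γ+1) := by
      rw [← add_div]; ring_nf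
    push_cast
    rw [show ((m:ℝ)+1+1) = ((m:ℝ)+2) from by ring]
    linarith

lemma helper2 {γ : ℝ} (N : ℕ) (hγ : γ < 0) (hγ' : γ ≠ -1) :
    ∀ m (A : Finset ℕ), A ⊆ Finset.Icc 1 N → A.card = m →
      (((N:ℝ) + 2) ^ (γ + 1) - ((N:ℝ) + 2 - m) ^ (γ + 1)) / (γ + 1)
        ≤ ∑ k ∈ A, ((k : ℝ) + 1) ^ γ := by
  intro m
  induction m with
  | zero =>
    intro A hA hcard
    rw [Finset.card_eq_zero.1 hcard]
    simp
  | succ m ih =>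
    intro A hA hcard
    have hne : A.Nonempty := Finset.card_pos.1 (by omega)
    set a := A.min' hne with ha
    have haA : a ∈ A := A.min'_mem hne
    have ha1 : 1 ≤ a := (Finset.mem_Icc.1 (hA haA)).1
    have hsub : A ⊆ Finset.Icc a N := fun k hk =>
      Finset.mem_Icc.2 ⟨A.min'_le k hk, (Finset.mem_Icc.1 (hA hk)).2⟩
    have hma : a + m + 1 ≤ N + 1 := by
      have := Finset.card_le_card hsub
      rw [hcard, Nat.card_Icc] at this; omega
    have hmN : m + 1 ≤ N := by omega
    have hcard' : (A.erase a).card = m := by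
      rw [Finset.card_erase_of_mem haA, hcard]
      omega
    have hIH := ih (A.erase a) (fun k hk => hA (Finset.mem_of_mem_erase hk)) hcard'
    have hb : (0:ℝ) < (N:ℝ) + 1 - m := by
      have : (m:ℝ) + 1 ≤ (N:ℝ) := by exact_mod_cast hmN
      linarith
    have hstep : (((N:ℝ)+2-m) ^ (γ+1) - ((N:ℝ)+1-m) ^ (γ+1)) / (γ+1) ≤ ((N:ℝ)+1-m) ^ γ := by
      have := step_anti (b := (N:ℝ)+1-m) hb hγ hγ'
      have h2 : ((N:ℝ)+1-m)+1 = (N:ℝ)+2-m := by ring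
      rwa [h2] at this
    have hanti : ((N:ℝ)+1-m) ^ γ ≤ ((a:ℝ)+1) ^ γ := by
      apply Real.rpow_le_rpow_of_nonpos (by positivity) _ hγ.le
      have : (a:ℝ) + (m:ℝ) + 1 ≤ (N:ℝ) + 1 := by exact_mod_cast hma
      linarith
    have hsum : ∑ k ∈ A.erase a, ((k : ℝ) + 1) ^ γ + ((a:ℝ)+1) ^ γ
        = ∑ k ∈ A, ((k : ℝ) + 1) ^ γ :=
      Finset.sum_erase_add A _ haA
    have hkey : (((N:ℝ)+2) ^ (γ+1) - ((N:ℝ)+1-m) ^ (γ+1)) / (γ+1)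
        = (((N:ℝ)+2) ^ (γ+1) - ((N:ℝ)+2-m) ^ (γ+1)) / (γ+1)
          + (((N:ℝ)+2-m) ^ (γ+1) - ((N:ℝ)+1-m) ^ (γ+1)) / (γ+1) := by
      rw [← add_div]; ring_nf
    push_cast
    have hgoal : ((N:ℝ) + 2 - ((m:ℝ)+1)) ^ (γ+1) = ((N:ℝ)+1-m) ^ (γ+1) := by ring_nf
    rw [hgoal]
    linarith


/-- Lemma 3.1: lower bounds for `∑_{k ∈ A_N} (k+1)^γ` where `A_N ⊆ {1,…,N}`. -/
theorem stmt4 (N : ℕ) (A : Finset ℕ) (hA : A ⊆ Finset.Icc 1 N) (γ : ℝ) :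
    (0 ≤ γ →
      (((A.card : ℝ) + 1) ^ (γ + 1) - 1) / (γ + 1) ≤ ∑ k ∈ A, ((k : ℝ) + 1) ^ γ) ∧
    (γ < 0 → γ ≠ -1 →
      ((N : ℝ) + 2) ^ (γ + 1) / (γ + 1) *
          (1 - (1 - (A.card : ℝ) / ((N : ℝ) + 2)) ^ (γ + 1)) ≤
        ∑ k ∈ A, ((k : ℝ) + 1) ^ γ) := by
  constructor
  · intro hγ
    exact helper1 hγ A.card A (fun k hk => (Finset.mem_Icc.1 (hA hk)).1) rfl
  · intro hγ hγ'
    have h := helper2 N hγ hγ' A.card A hA rfl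
    have hm : (A.card : ℝ) ≤ N := by
      have := Finset.card_le_card hA
      rw [Nat.card_Icc] at this
      exact_mod_cast by omega
    have hx : (0:ℝ) ≤ (N:ℝ) + 2 - A.card := by linarith
    have hN2 : (0:ℝ) < (N:ℝ) + 2 := by positivity
    have heq : ((N : ℝ) + 2) ^ (γ + 1) / (γ + 1) *
          (1 - (1 - (A.card : ℝ) / ((N : ℝ) + 2)) ^ (γ + 1))
        = (((N:ℝ) + 2) ^ (γ + 1) - ((N:ℝ) + 2 - A.card) ^ (γ + 1)) / (γ + 1) := by
      have h1 : 1 - (A.card : ℝ) / ((N : ℝ) + 2) = ((N:ℝ) + 2 - A.card) / ((N:ℝ) + 2) := by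
        field_simp
      rw [h1, Real.div_rpow hx hN2.le]
      have hne : ((N:ℝ)+2) ^ (γ+1) ≠ 0 := ne_of_gt (Real.rpow_pos_of_pos hN2 _)
      set P := ((N:ℝ)+2) ^ (γ+1)
      set Q := ((N:ℝ)+2-(A.card:ℝ)) ^ (γ+1)
      have h2 : P * (1 - Q / P) = P - Q := by field_simp
      calc P / (γ+1) * (1 - Q/P) = P * (1 - Q/P) / (γ+1) := by ring
        _ = (P - Q) / (γ+1) := by rw [h2]
    rw [heq]
    exact h
end

section
/- For every 0 < γ < 1, ∑_{k=1}^n e^{k^γ} is asymptotically equivalent to (n^{1−γ}/γ)·e^{n^γ} as n → ∞; that is, the ratio (∑_{k=1}^n e^{k^γ}) / ((n^{1−γ}/γ)·e^{n^γ}) tends to 1 as n tends to infinity. -/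
open Filter Set MeasureTheory
open scoped Topology ENNReal Real Classical

/-- For `0 < γ < 1`, `∑_{k=1}^n e^{k^γ} ∼ (n^{1-γ}/γ) e^{n^γ}` as `n → ∞`. -/
theorem stmt10 (γ : ℝ) (h0 : 0 < γ) (h1 : γ < 1) :
    Tendsto (fun n : ℕ =>
        (∑ k ∈ Finset.Icc 1 n, Real.exp ((k : ℝ) ^ γ)) /
          (((n : ℝ) ^ (1 - γ) / γ) * Real.exp ((n : ℝ) ^ γ)))
      atTop (nhds 1) := by
  have hγ1 : (0:ℝ) < 1 - γ := by linarith
  set b : ℕ → ℝ := fun n => (n:ℝ)^(1-γ)/γ * Real.exp ((n:ℝ)^γ) with hbdef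
  set w : ℕ → ℝ := fun i => b (i+1) - b i with hwdef
  have hcast : ∀ i : ℕ, ((i+1 : ℕ) : ℝ) = (i:ℝ)+1 := by intro i; push_cast; ring
  -- positivity of increments
  have hwpos : ∀ i, 0 < w i := by
    intro i
    have hi0 : (0:ℝ) ≤ (i:ℝ) := Nat.cast_nonneg i
    have hlt : (i:ℝ) < (i:ℝ)+1 := by linarith
    have hc1 : (i:ℝ)^(1-γ) ≤ ((i:ℝ)+1)^(1-γ) :=
      Real.rpow_le_rpow hi0 (by linarith) hγ1.le
    have hc2 : (0:ℝ) < ((i:ℝ)+1)^(1-γ) := Real.rpow_pos_of_pos (by linarith) _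
    have he : Real.exp ((i:ℝ)^γ) < Real.exp (((i:ℝ)+1)^γ) :=
      Real.exp_lt_exp.2 (Real.rpow_lt_rpow hi0 hlt h0)
    have h3 : b i ≤ ((i:ℝ)+1)^(1-γ)/γ * Real.exp ((i:ℝ)^γ) := by
      simp only [hbdef]
      exact mul_le_mul_of_nonneg_right (div_le_div_of_nonneg_right hc1 h0.le) (Real.exp_pos _).le
    have h4 : ((i:ℝ)+1)^(1-γ)/γ * Real.exp ((i:ℝ)^γ) < b (i+1) := by
      simp only [hbdef, hcast i]
      exact mul_lt_mul_of_pos_left he (by positivity)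
    simp only [hwdef]; linarith
  have hb0 : b 0 = 0 := by simp [hbdef, Real.zero_rpow hγ1.ne']
  have hsum_w : ∀ n, ∑ i ∈ Finset.range n, w i = b n := by
    intro n
    simp only [hwdef]
    rw [Finset.sum_range_sub b]
    simp [hb0]
  have hbtop : Tendsto b atTop atTop := by
    apply Tendsto.atTop_mul_atTop₀
    · exact ((tendsto_rpow_atTop hγ1).comp tendsto_natCast_atTop_atTop).atTop_div_const h0
    · exact Real.tendsto_exp_atTop.comp
        ((tendsto_rpow_atTop h0).comp tendsto_natCast_atTop_atTop)
  -- T1 : n ((1+1/n)^γ - 1) → γ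
  have T1 : Tendsto (fun n : ℕ => (n:ℝ) * ((1 + 1/(n:ℝ))^γ - 1)) atTop (𝓝 γ) := by
    have hD : HasDerivAt (fun y : ℝ => y ^ γ) γ 1 := by
      have := Real.hasDerivAt_rpow_const (x := (1:ℝ)) (p := γ) (Or.inl one_ne_zero)
      simpa using this
    have hs := hasDerivAt_iff_tendsto_slope.1 hD
    have h2 : Tendsto (fun n : ℕ => 1 + 1/(n:ℝ)) atTop (𝓝[≠] 1) := by
      rw [tendsto_nhdsWithin_iff]
      constructor
      · have : Tendsto (fun n : ℕ => 1/(n:ℝ)) atTop (𝓝 0) := by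
          simpa using tendsto_one_div_atTop_nhds_zero_nat (𝕜 := ℝ)
        simpa using (tendsto_const_nhds (x := (1:ℝ))).add this
      · filter_upwards [eventually_gt_atTop 0] with n hn
        have : (0:ℝ) < 1/(n:ℝ) := by positivity
        simp only [mem_compl_iff, mem_singleton_iff]
        nlinarith
    have h4 : Tendsto (fun n : ℕ => ((1 + 1/(n:ℝ))^γ - 1) / (1/(n:ℝ))) atTop (𝓝 γ) := by
      refine (hs.comp h2).congr fun n => ?_
      simp [slope_def_field, div_eq_div_iff]
    refine h4.congr' ?_
    filter_upwards [eventually_gt_atTop 0] with n hn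
    have hn' : (n:ℝ) ≠ 0 := by positivity
    field_simp
  -- hq : ((n+1)/n)^(1-γ) → 1
  have hq : Tendsto (fun n : ℕ => (((n:ℝ)+1)/(n:ℝ))^(1-γ)) atTop (𝓝 1) := by
    have hbase : Tendsto (fun n : ℕ => ((n:ℝ)+1)/(n:ℝ)) atTop (𝓝 1) := by
      have h1' : Tendsto (fun n : ℕ => 1 + 1/(n:ℝ)) atTop (𝓝 1) := by
        have : Tendsto (fun n : ℕ => 1/(n:ℝ)) atTop (𝓝 0) := by
          simpa using tendsto_one_div_atTop_nhds_zero_nat (𝕜 := ℝ)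
        simpa using (tendsto_const_nhds (x := (1:ℝ))).add this
      refine h1'.congr' ?_
      filter_upwards [eventually_gt_atTop 0] with n hn
      have hn' : (n:ℝ) ≠ 0 := by positivity
      field_simp
    have := hbase.rpow_const (p := 1-γ) (Or.inr hγ1.le)
    simpa using this
  -- hd : n^(1-γ) ((n+1)^γ - n^γ) → γ
  have hd : Tendsto (fun n : ℕ => (n:ℝ)^(1-γ) * (((n:ℝ)+1)^γ - (n:ℝ)^γ)) atTop (𝓝 γ) := by
    refine T1.congr' ?_
    filter_upwards [eventually_gt_atTop 0] with n hn
    have hn0 : (0:ℝ) < (n:ℝ) := by exact_mod_cast hn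
    have e1 : ((n:ℝ)+1)^γ = (n:ℝ)^γ * (1+1/(n:ℝ))^γ := by
      rw [← Real.mul_rpow hn0.le (by positivity)]
      congr 1
      field_simp
    have e2 : (n:ℝ)^(1-γ) * (n:ℝ)^γ = (n:ℝ) := by
      rw [← Real.rpow_add hn0]; simp
    calc (n:ℝ) * ((1 + 1/(n:ℝ))^γ - 1)
        = ((n:ℝ)^(1-γ) * (n:ℝ)^γ) * ((1 + 1/(n:ℝ))^γ - 1) := by rw [e2]
      _ = (n:ℝ)^(1-γ) * (((n:ℝ)+1)^γ - (n:ℝ)^γ) := by rw [e1]; ring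
  -- hBd : (n+1)^(1-γ) ((n+1)^γ - n^γ) → γ
  have hBd : Tendsto (fun n : ℕ => ((n:ℝ)+1)^(1-γ) * (((n:ℝ)+1)^γ - (n:ℝ)^γ)) atTop (𝓝 γ) := by
    have := hq.mul hd
    rw [one_mul] at this
    refine this.congr' ?_
    filter_upwards [eventually_gt_atTop 0] with n hn
    have hn0 : (0:ℝ) < (n:ℝ) := by exact_mod_cast hn
    have e3 : (((n:ℝ)+1)/(n:ℝ))^(1-γ) = ((n:ℝ)+1)^(1-γ) / (n:ℝ)^(1-γ) :=
      Real.div_rpow (by linarith) hn0.le _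
    have hne : (n:ℝ)^(1-γ) ≠ 0 := (Real.rpow_pos_of_pos hn0 _).ne'
    rw [e3]
    field_simp
  -- squeeze : n^(1-γ) log(1+1/n) → 0
  have hnsq : Tendsto (fun n : ℕ => (n:ℝ)^(1-γ) * Real.log (1 + 1/(n:ℝ))) atTop (𝓝 0) := by
    have hub : Tendsto (fun n : ℕ => (n:ℝ)^(-γ)) atTop (𝓝 0) :=
      (tendsto_rpow_neg_atTop h0).comp tendsto_natCast_atTop_atTop
    refine tendsto_of_tendsto_of_tendsto_of_le_of_le' tendsto_const_nhds hub ?_ ?_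
    · filter_upwards [eventually_gt_atTop 0] with n hn
      have hn0 : (0:ℝ) < (n:ℝ) := by exact_mod_cast hn
      have : (0:ℝ) ≤ Real.log (1 + 1/(n:ℝ)) :=
        Real.log_nonneg (by nlinarith [one_div_pos.2 hn0])
      positivity
    · filter_upwards [eventually_gt_atTop 0] with n hn
      have hn0 : (0:ℝ) < (n:ℝ) := by exact_mod_cast hn
      have hlog : Real.log (1 + 1/(n:ℝ)) ≤ 1/(n:ℝ) := by
        have := Real.log_le_sub_one_of_pos (x := 1 + 1/(n:ℝ)) (by positivity)
        linarith
      have hrw : (n:ℝ)^(1-γ) * (1/(n:ℝ)) = (n:ℝ)^(-γ) := by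
        rw [one_div, ← Real.rpow_neg_one (n:ℝ), ← Real.rpow_add hn0]
        congr 1
        ring
      calc (n:ℝ)^(1-γ) * Real.log (1 + 1/(n:ℝ))
          ≤ (n:ℝ)^(1-γ) * (1/(n:ℝ)) := by
            exact mul_le_mul_of_nonneg_left hlog (Real.rpow_nonneg hn0.le _)
        _ = (n:ℝ)^(-γ) := hrw
  -- hlog : (n+1)^(1-γ) (log(n+1) - log n) → 0
  have hlog : Tendsto (fun n : ℕ => ((n:ℝ)+1)^(1-γ) * (Real.log ((n:ℝ)+1) - Real.log (n:ℝ)))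
      atTop (𝓝 0) := by
    have := hq.mul hnsq
    rw [mul_zero] at this
    refine this.congr' ?_
    filter_upwards [eventually_gt_atTop 0] with n hn
    have hn0 : (0:ℝ) < (n:ℝ) := by exact_mod_cast hn
    have e3 : (((n:ℝ)+1)/(n:ℝ))^(1-γ) = ((n:ℝ)+1)^(1-γ) / (n:ℝ)^(1-γ) :=
      Real.div_rpow (by linarith) hn0.le _
    have hne : (n:ℝ)^(1-γ) ≠ 0 := (Real.rpow_pos_of_pos hn0 _).ne'
    have e4 : Real.log (1 + 1/(n:ℝ)) = Real.log ((n:ℝ)+1) - Real.log (n:ℝ) := by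
      rw [← Real.log_div (by positivity) hn0.ne']
      congr 1
      field_simp
    rw [e3, e4]
    field_simp
  set y : ℕ → ℝ := fun n => (((n:ℝ)+1)^γ - (n:ℝ)^γ)
      + (1-γ) * (Real.log ((n:ℝ)+1) - Real.log (n:ℝ)) with hydef
  -- hBy : ((n+1)^(1-γ)/γ) * y n → 1
  have hBy : Tendsto (fun n : ℕ => (((n:ℝ)+1)^(1-γ)/γ) * y n) atTop (𝓝 1) := by
    have h := (hBd.const_mul (1/γ)).add (hlog.const_mul ((1-γ)/γ))
    have hval : 1/γ * γ + (1-γ)/γ * 0 = 1 := by field_simp; ring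
    rw [hval] at h
    refine h.congr fun n => ?_
    simp only [hydef]
    ring
  have hypos : ∀ n : ℕ, 1 ≤ n → 0 < y n := by
    intro n hn
    have hn0 : (0:ℝ) < (n:ℝ) := by exact_mod_cast hn
    have hd' : (n:ℝ)^γ < ((n:ℝ)+1)^γ := Real.rpow_lt_rpow hn0.le (by linarith) h0
    have hl' : Real.log (n:ℝ) < Real.log ((n:ℝ)+1) := Real.log_lt_log hn0 (by linarith)
    simp only [hydef]
    nlinarith
  have hBtop : Tendsto (fun n : ℕ => ((n:ℝ)+1)^(1-γ)) atTop atTop :=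
    (tendsto_rpow_atTop hγ1).comp
      (tendsto_atTop_add_const_right _ 1 tendsto_natCast_atTop_atTop)
  have hy0 : Tendsto y atTop (𝓝 0) := by
    have hinv : Tendsto (fun n : ℕ => γ / ((n:ℝ)+1)^(1-γ)) atTop (𝓝 0) :=
      Tendsto.div_atTop tendsto_const_nhds hBtop
    have := hBy.mul hinv
    rw [one_mul] at this
    refine this.congr fun n => ?_
    have hBne : ((n:ℝ)+1)^(1-γ) ≠ 0 := (Real.rpow_pos_of_pos (by positivity) _).ne'
    field_simp
  -- exp slope
  have hexpS : Tendsto (fun t : ℝ => (1 - Real.exp (-t))/t) (𝓝[≠] (0:ℝ)) (𝓝 1) := by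
    have hG : HasDerivAt (fun t : ℝ => 1 - Real.exp (-t)) 1 0 := by
      have h1' : HasDerivAt (fun t : ℝ => -t) (-1) 0 := (hasDerivAt_id (0:ℝ)).neg
      have h2' := h1'.exp
      have h3' := h2'.const_sub 1
      simpa using h3'
    have hs := hasDerivAt_iff_tendsto_slope.1 hG
    refine hs.congr fun t => ?_
    simp [slope_def_field]
  have hyne : ∀ᶠ n : ℕ in atTop, y n ≠ 0 := by
    filter_upwards [eventually_ge_atTop 1] with n hn
    exact (hypos n hn).ne'
  have htendy : Tendsto y atTop (𝓝[≠] (0:ℝ)) := by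
    rw [tendsto_nhdsWithin_iff]
    exact ⟨hy0, by simpa using hyne⟩
  have hE : Tendsto (fun n : ℕ => (1 - Real.exp (-(y n)))/(y n)) atTop (𝓝 1) :=
    hexpS.comp htendy
  -- hr : r → 1
  set r : ℕ → ℝ := fun n => w n / Real.exp (((n:ℝ)+1)^γ) with hrdef
  have hr : Tendsto r atTop (𝓝 1) := by
    have h := hBy.mul hE
    rw [one_mul] at h
    refine h.congr' ?_
    filter_upwards [eventually_ge_atTop 1] with n hn
    have hn0 : (0:ℝ) < (n:ℝ) := by exact_mod_cast hn
    have hyn := (hypos n hn).ne'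
    have e1 : (n:ℝ)^(1-γ) = Real.exp (Real.log (n:ℝ) * (1-γ)) :=
      Real.rpow_def_of_pos hn0 _
    have e2 : ((n:ℝ)+1)^(1-γ) = Real.exp (Real.log ((n:ℝ)+1) * (1-γ)) :=
      Real.rpow_def_of_pos (by positivity) _
    have key : Real.exp (((n:ℝ)+1)^γ) * (((n:ℝ)+1)^(1-γ)) * Real.exp (-(y n))
        = Real.exp ((n:ℝ)^γ) * ((n:ℝ))^(1-γ) := by
      rw [e1, e2, ← Real.exp_add, ← Real.exp_add, ← Real.exp_add]
      congr 1
      simp only [hydef]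
      ring
    have hwn : w n = (((n:ℝ)+1)^(1-γ)/γ) * (1 - Real.exp (-(y n)))
        * Real.exp (((n:ℝ)+1)^γ) := by
      simp only [hwdef, hbdef, hcast n]
      linear_combination (1/γ) * key
    have hEne : Real.exp (((n:ℝ)+1)^γ) ≠ 0 := (Real.exp_pos _).ne'
    simp only [hrdef]
    rw [hwn]
    field_simp
  -- littleO
  set f : ℕ → ℝ := fun i => Real.exp (((i:ℝ)+1)^γ) - w i with hfdef
  have hfw : Asymptotics.IsLittleO atTop f w := by
    refine Asymptotics.isLittleO_of_tendsto (fun i hi => absurd hi (hwpos i).ne') ?_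
    have hinv : Tendsto (fun n : ℕ => (r n)⁻¹ - 1) atTop (𝓝 0) := by
      have := (hr.inv₀ one_ne_zero).sub (tendsto_const_nhds (x := (1:ℝ)))
      simpa using this
    refine hinv.congr fun n => ?_
    have hwne : w n ≠ 0 := (hwpos n).ne'
    have hEne : Real.exp (((n:ℝ)+1)^γ) ≠ 0 := (Real.exp_pos _).ne'
    simp only [hrdef, hfdef]
    rw [inv_div]
    field_simp
  have hsumtop : Tendsto (fun n => ∑ i ∈ Finset.range n, w i) atTop atTop :=
    hbtop.congr fun n => (hsum_w n).symm
  have hsum := hfw.sum_range (fun i => (hwpos i).le) hsumtop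
  have hdiv : Tendsto
      (fun n => (∑ i ∈ Finset.range n, f i) / (∑ i ∈ Finset.range n, w i))
      atTop (𝓝 0) := hsum.tendsto_div_nhds_zero
  -- rewrite the goal
  have hS : ∀ n : ℕ, ∑ k ∈ Finset.Icc 1 n, Real.exp ((k : ℝ) ^ γ)
      = ∑ i ∈ Finset.range n, Real.exp (((i:ℝ)+1)^γ) := by
    intro n
    induction n with
    | zero => simp
    | succ m ih =>
        rw [Finset.sum_Icc_succ_top (Nat.le_add_left 1 m), ih, Finset.sum_range_succ]
        congr 2
        push_cast
        ring
  have hfin := hdiv.add (tendsto_const_nhds (x := (1:ℝ)))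
  rw [zero_add] at hfin
  refine hfin.congr' ?_
  filter_upwards [eventually_ge_atTop 1] with n hn
  have hbn : 0 < b n := by
    rw [← hsum_w n]
    exact Finset.sum_pos (fun i _ => hwpos i) (Finset.nonempty_range_iff.2 (by omega))
  have hfs : ∑ i ∈ Finset.range n, f i
      = (∑ k ∈ Finset.Icc 1 n, Real.exp ((k : ℝ) ^ γ)) - b n := by
    simp only [hfdef]
    rw [Finset.sum_sub_distrib, hsum_w, hS]
  rw [hsum_w, hfs]
  show ((∑ k ∈ Finset.Icc 1 n, Real.exp ((k:ℝ)^γ)) - b n) / b n + 1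
      = (∑ k ∈ Finset.Icc 1 n, Real.exp ((k:ℝ)^γ)) / b n
  field_simp
  ring
end

section
/- Let 0 < γ ≤ 1. There exists a subset E_γ ⊆ ℕ such that d̄_{β^γ}(E_γ) > 0 and, for every 0 ≤ γ' < γ, d̄_{β^{γ'}}(E_γ) = 0. -/
open Filter Set MeasureTheory
open scoped Topology ENNReal Real Classical

private lemma tangent {g t : ℝ} (hg0 : 0 ≤ g) (hg1 : g ≤ 1) (ht : 0 ≤ t) :
    t ^ g ≤ 1 - g + g * t := by
  have h := Real.geom_mean_le_arith_mean2_weighted (w₁ := g) (w₂ := 1 - g)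
    (p₁ := t) (p₂ := 1) hg0 (by linarith) ht zero_le_one (by ring)
  simpa [Real.one_rpow, mul_comm] using h.trans_eq (by ring)

private lemma rpow_div_self {a : ℝ} (ha : 0 < a) (g : ℝ) : a ^ g / a = a ^ (g - 1) := by
  rw [Real.rpow_sub ha, Real.rpow_one]

/-- tangent at `a` from the right : `b^g ≤ a^g + g a^(g-1) (b-a)` for `0 < a ≤ b`. -/
private lemma pow_le_tangent {g a b : ℝ} (hg0 : 0 ≤ g) (hg1 : g ≤ 1)
    (ha : 0 < a) (hab : a ≤ b) :
    b ^ g ≤ a ^ g + g * a ^ (g - 1) * (b - a) := by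
  have hb : (0:ℝ) ≤ b := le_trans ha.le hab
  have ht : (0:ℝ) ≤ b / a := by positivity
  have h := tangent hg0 hg1 ht
  have hba : (b / a) ^ g = b ^ g / a ^ g := Real.div_rpow hb ha.le g
  have hpos : (0:ℝ) < a ^ g := Real.rpow_pos_of_pos ha g
  rw [hba, div_le_iff₀ hpos] at h
  calc b ^ g ≤ (1 - g + g * (b / a)) * a ^ g := h
    _ = a ^ g + g * (a ^ g / a) * (b - a) := by field_simp; ring
    _ = a ^ g + g * a ^ (g - 1) * (b - a) := by rw [rpow_div_self ha]

/-- tangent at `n` : `k^g ≤ n^g - g n^(g-1) (n-k)` for `0 ≤ k ≤ n`, `0 < n`. -/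
private lemma pow_le_tangent' {g k n : ℝ} (hg0 : 0 ≤ g) (hg1 : g ≤ 1)
    (hk : 0 ≤ k) (hkn : k ≤ n) (hn : 0 < n) :
    k ^ g ≤ n ^ g - g * n ^ (g - 1) * (n - k) := by
  have ht : (0:ℝ) ≤ k / n := by positivity
  have h := tangent hg0 hg1 ht
  have hba : (k / n) ^ g = k ^ g / n ^ g := Real.div_rpow hk hn.le g
  have hpos : (0:ℝ) < n ^ g := Real.rpow_pos_of_pos hn g
  rw [hba, div_le_iff₀ hpos] at h
  calc k ^ g ≤ (1 - g + g * (k / n)) * n ^ g := h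
    _ = n ^ g - g * (n ^ g / n) * (n - k) := by field_simp; ring
    _ = n ^ g - g * n ^ (g - 1) * (n - k) := by rw [rpow_div_self hn]

/-- Upper bound on the weight sum: `∑_{k=1}^n e^{k^γ} ≤ (e/γ) n^{1-γ} e^{n^γ}`. -/
private lemma sum_beta_le {γ : ℝ} (h0 : 0 < γ) (h1 : γ ≤ 1) {n : ℕ} (hn : 1 ≤ n) :
    ∑ k ∈ Finset.Icc 1 n, Real.exp ((k:ℝ)^γ) ≤
      (Real.exp 1 / γ) * (n:ℝ)^(1-γ) * Real.exp ((n:ℝ)^γ) := by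
  have hnR : (1:ℝ) ≤ (n:ℝ) := by exact_mod_cast hn
  have hnpos : (0:ℝ) < n := by linarith
  set x : ℝ := γ * (n:ℝ)^(γ-1) with hxdef
  have hx0 : 0 < x := by
    have := Real.rpow_pos_of_pos hnpos (γ-1); positivity
  have hx1 : x ≤ 1 := by
    have : (n:ℝ)^(γ-1) ≤ 1 := Real.rpow_le_one_of_one_le_of_nonpos hnR (by linarith)
    calc x ≤ 1 * 1 := by
          apply mul_le_mul h1 this (le_of_lt (by positivity)) zero_le_one
      _ = 1 := one_mul 1
  set r : ℝ := Real.exp (-x) with hrdef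
  have hr0 : 0 ≤ r := (Real.exp_pos _).le
  have hr1 : r < 1 := Real.exp_lt_one_iff.mpr (by linarith)
  have hterm : ∀ k ∈ Finset.Icc 1 n, Real.exp ((k:ℝ)^γ) ≤ Real.exp ((n:ℝ)^γ) * r ^ (n - k) := by
    intro k hk
    rw [Finset.mem_Icc] at hk
    have hknR : (k:ℝ) ≤ (n:ℝ) := by exact_mod_cast hk.2
    have hcast : ((n - k : ℕ) : ℝ) = (n:ℝ) - (k:ℝ) := by rw [Nat.cast_sub hk.2]
    have hrm : r ^ (n - k) = Real.exp (-(x * ((n:ℝ) - (k:ℝ)))) := by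
      rw [hrdef, ← Real.exp_nat_mul, ← hcast]; ring_nf
    rw [hrm, ← Real.exp_add]
    apply Real.exp_le_exp.mpr
    have h2 := pow_le_tangent' (le_of_lt h0) h1 (by positivity : (0:ℝ) ≤ (k:ℝ)) hknR hnpos
    rw [← hxdef] at h2
    linarith
  have hsum1 : ∑ k ∈ Finset.Icc 1 n, Real.exp ((k:ℝ)^γ)
      ≤ ∑ k ∈ Finset.Icc 1 n, Real.exp ((n:ℝ)^γ) * r ^ (n - k) :=
    Finset.sum_le_sum hterm
  have hre : ∑ k ∈ Finset.Icc 1 n, r ^ (n - k) = ∑ m ∈ Finset.range n, r ^ m := by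
    apply Finset.sum_nbij' (fun k => n - k) (fun m => n - m)
    · intro k hk; rw [Finset.mem_Icc] at hk; rw [Finset.mem_range]; omega
    · intro m hm; rw [Finset.mem_range] at hm; rw [Finset.mem_Icc]; omega
    · intro k hk; rw [Finset.mem_Icc] at hk; omega
    · intro m hm; rw [Finset.mem_range] at hm; omega
    · intro k _; rfl
  have hgeom : ∑ m ∈ Finset.range n, r ^ m ≤ (1 - r)⁻¹ := by
    have hs : Summable (fun m : ℕ => r ^ m) := summable_geometric_of_lt_one hr0 hr1
    calc ∑ m ∈ Finset.range n, r ^ m ≤ ∑' m : ℕ, r ^ m :=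
          hs.sum_le_tsum _ (fun m _ => pow_nonneg hr0 m)
      _ = (1 - r)⁻¹ := tsum_geometric_of_lt_one hr0 hr1
  have hrecip : (1 - r)⁻¹ ≤ Real.exp 1 / x := by
    have hb := Real.add_one_le_exp x
    have hepos : (0:ℝ) < Real.exp x := Real.exp_pos x
    have h1r : x * r ≤ 1 - r := by
      have hxr : (x + 1) * r ≤ 1 := by
        rw [hrdef, Real.exp_neg, mul_inv_le_iff₀ hepos]; linarith
      linarith
    have hrlow : Real.exp (-(1:ℝ)) ≤ r := by
      rw [hrdef]; exact Real.exp_le_exp.mpr (by linarith)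
    have hkey : x / Real.exp 1 ≤ 1 - r := by
      have : x * Real.exp (-(1:ℝ)) ≤ x * r := by
        apply mul_le_mul_of_nonneg_left hrlow hx0.le
      rw [Real.exp_neg] at this
      calc x / Real.exp 1 = x * (Real.exp 1)⁻¹ := div_eq_mul_inv x _
        _ ≤ x * r := this
        _ ≤ 1 - r := h1r
    have hpos' : (0:ℝ) < x / Real.exp 1 := by positivity
    calc (1 - r)⁻¹ ≤ (x / Real.exp 1)⁻¹ := inv_anti₀ hpos' hkey
      _ = Real.exp 1 / x := inv_div _ _
  have hfin : (Real.exp 1 / x) = (Real.exp 1 / γ) * (n:ℝ)^(1-γ) := by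
    have h1 : (n:ℝ)^(1-γ) * (n:ℝ)^(γ-1) = 1 := by
      rw [← Real.rpow_add hnpos]; norm_num
    have hne : (n:ℝ)^(γ-1) ≠ 0 := (Real.rpow_pos_of_pos hnpos _).ne'
    field_simp [hxdef]
    linear_combination (-γ) * h1
  calc ∑ k ∈ Finset.Icc 1 n, Real.exp ((k:ℝ)^γ)
      ≤ ∑ k ∈ Finset.Icc 1 n, Real.exp ((n:ℝ)^γ) * r ^ (n - k) := hsum1
    _ = Real.exp ((n:ℝ)^γ) * ∑ k ∈ Finset.Icc 1 n, r ^ (n - k) := by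
        rw [Finset.mul_sum]
    _ ≤ Real.exp ((n:ℝ)^γ) * (Real.exp 1 / x) := by
        apply mul_le_mul_of_nonneg_left _ (Real.exp_pos _).le
        rw [hre]; exact hgeom.trans hrecip
    _ = (Real.exp 1 / γ) * (n:ℝ)^(1-γ) * Real.exp ((n:ℝ)^γ) := by rw [hfin]; ring

/-- Lower bound: the top `M` terms give `∑_{k=n-M+1}^n e^{k^g} ≥ M e^{(n-M)^g}`. -/
private lemma sum_block_ge {g : ℝ} (hg0 : 0 ≤ g) {M n : ℕ} (hMn : M ≤ n) :
    (M:ℝ) * Real.exp (((n - M : ℕ):ℝ)^g) ≤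
      ∑ k ∈ Finset.Icc (n - M + 1) n, Real.exp ((k:ℝ)^g) := by
  have hcard : (Finset.Icc (n - M + 1) n).card = M := by
    rw [Nat.card_Icc]; omega
  have hterm : ∀ k ∈ Finset.Icc (n - M + 1) n,
      Real.exp (((n - M : ℕ):ℝ)^g) ≤ Real.exp ((k:ℝ)^g) := by
    intro k hk
    rw [Finset.mem_Icc] at hk
    apply Real.exp_le_exp.mpr
    apply Real.rpow_le_rpow (by positivity) _ hg0
    exact_mod_cast Nat.le_of_lt_succ (by omega)
  have h2 := Finset.card_nsmul_le_sum (Finset.Icc (n - M + 1) n)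
    (fun k => Real.exp ((k:ℝ)^g)) (Real.exp (((n - M : ℕ):ℝ)^g)) hterm
  rw [hcard, nsmul_eq_mul] at h2
  exact h2

/-- Lower bound on the full weight sum: `∑_{k=1}^n e^{k^g} ≥ (n^{1-g}/2) e^{n^g} e^{-6}`. -/
private lemma denom_ge {g : ℝ} (hg0 : 0 ≤ g) (hg1 : g ≤ 1) {n : ℕ} (hn : 4 ≤ n) :
    (n:ℝ)^(1-g)/2 * Real.exp (-6) * Real.exp ((n:ℝ)^g) ≤
      ∑ k ∈ Finset.Icc 1 n, Real.exp ((k:ℝ)^g) := by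
  have hnR : (4:ℝ) ≤ (n:ℝ) := by exact_mod_cast hn
  have hnpos : (0:ℝ) < n := by linarith
  set M : ℕ := ⌈(n:ℝ)^(1-g)/2⌉₊ with hMdef
  have hpow_pos : (0:ℝ) < (n:ℝ)^(1-g) := Real.rpow_pos_of_pos hnpos _
  have hMlow : (n:ℝ)^(1-g)/2 ≤ (M:ℝ) := Nat.le_ceil _
  have hMup : (M:ℝ) ≤ (n:ℝ)^(1-g)/2 + 1 := (Nat.ceil_lt_add_one (by positivity)).le
  have hpow_n : (n:ℝ)^(1-g) ≤ (n:ℝ) := by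
    calc (n:ℝ)^(1-g) ≤ (n:ℝ)^(1:ℝ) :=
          Real.rpow_le_rpow_of_exponent_le (by linarith) (by linarith)
      _ = (n:ℝ) := Real.rpow_one _
  have hMnR : (M:ℝ) ≤ (n:ℝ)/2 + 1 := by linarith
  have hMn : M ≤ n := by
    have : (M:ℝ) ≤ (n:ℝ) := by linarith
    exact_mod_cast this
  have hcast : ((n - M : ℕ):ℝ) = (n:ℝ) - (M:ℝ) := by rw [Nat.cast_sub hMn]
  have hnM4 : (n:ℝ)/4 ≤ ((n - M : ℕ):ℝ) := by rw [hcast]; linarith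
  have hnMpos : (0:ℝ) < ((n - M : ℕ):ℝ) := by linarith
  -- exponent comparison
  have hexp : (n:ℝ)^g ≤ (((n - M : ℕ)):ℝ)^g + 6 := by
    have htan := pow_le_tangent hg0 hg1 hnMpos (by rw [hcast]; linarith : ((n-M:ℕ):ℝ) ≤ (n:ℝ))
    have h1 : (((n - M:ℕ)):ℝ)^(g-1) ≤ ((n:ℝ)/4)^(g-1) :=
      Real.rpow_le_rpow_of_nonpos (by positivity) hnM4 (by linarith)
    have h2 : ((n:ℝ)/4)^(g-1) = (n:ℝ)^(g-1) * ((4:ℝ))^(1-g) := by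
      rw [Real.div_rpow hnpos.le (by norm_num)]
      rw [show (1-g) = -(g-1) by ring, Real.rpow_neg (by norm_num)]
      field_simp
    have h3 : (n:ℝ)^(g-1) * (n:ℝ)^(1-g) = 1 := by
      rw [← Real.rpow_add hnpos]; norm_num
    have h4 : ((4:ℝ))^(1-g) ≤ 4 := by
      calc ((4:ℝ))^(1-g) ≤ (4:ℝ)^(1:ℝ) :=
            Real.rpow_le_rpow_of_exponent_le (by norm_num) (by linarith)
        _ = 4 := Real.rpow_one _
    have h5 : (n:ℝ)^(g-1) ≤ 1 := Real.rpow_le_one_of_one_le_of_nonpos (by linarith) (by linarith)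
    -- g * (n-M)^(g-1) * (n - (n-M)) ≤ 6
    have hsub : (n:ℝ) - ((n-M:ℕ):ℝ) = (M:ℝ) := by rw [hcast]; ring
    have hbound : g * (((n - M:ℕ)):ℝ)^(g-1) * ((n:ℝ) - ((n-M:ℕ):ℝ)) ≤ 6 := by
      rw [hsub]
      have hgM : (0:ℝ) ≤ (M:ℝ) := Nat.cast_nonneg M
      have hnm_nonneg : (0:ℝ) ≤ (((n - M:ℕ)):ℝ)^(g-1) := (Real.rpow_pos_of_pos hnMpos _).le
      calc g * (((n - M:ℕ)):ℝ)^(g-1) * (M:ℝ)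
          ≤ 1 * (((n:ℝ)/4)^(g-1)) * ((n:ℝ)^(1-g)/2 + 1) := by
            apply mul_le_mul (mul_le_mul hg1 h1 hnm_nonneg zero_le_one) hMup hgM
            positivity
        _ = (n:ℝ)^(g-1) * ((4:ℝ))^(1-g) * ((n:ℝ)^(1-g)/2 + 1) := by rw [h2]; ring
        _ = ((4:ℝ))^(1-g) * ((n:ℝ)^(g-1) * (n:ℝ)^(1-g)/2 + (n:ℝ)^(g-1)) := by ring
        _ ≤ 4 * (1/2 + 1) := by
            have h6 : (0:ℝ) ≤ (4:ℝ)^(1-g) := by positivity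
            have h7 : (n:ℝ)^(g-1) * (n:ℝ)^(1-g)/2 + (n:ℝ)^(g-1) ≤ 1/2 + 1 := by
              rw [h3]; linarith
            have h8 : (0:ℝ) ≤ (n:ℝ)^(g-1) * (n:ℝ)^(1-g)/2 + (n:ℝ)^(g-1) := by
              rw [h3]; positivity
            apply mul_le_mul h4 h7 h8 (by norm_num)
        _ = 6 := by norm_num
    linarith
  -- combine
  have hblock := sum_block_ge hg0 hMn
  have hsubset : Finset.Icc (n - M + 1) n ⊆ Finset.Icc 1 n := by
    intro k hk; rw [Finset.mem_Icc] at *; omega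
  have hmono : ∑ k ∈ Finset.Icc (n - M + 1) n, Real.exp ((k:ℝ)^g)
      ≤ ∑ k ∈ Finset.Icc 1 n, Real.exp ((k:ℝ)^g) :=
    Finset.sum_le_sum_of_subset_of_nonneg hsubset (fun k _ _ => (Real.exp_pos _).le)
  calc (n:ℝ)^(1-g)/2 * Real.exp (-6) * Real.exp ((n:ℝ)^g)
      = (n:ℝ)^(1-g)/2 * Real.exp ((n:ℝ)^g - 6) := by
        rw [Real.exp_sub, Real.exp_neg]
        field_simp
    _ ≤ (M:ℝ) * Real.exp (((n - M:ℕ):ℝ)^g) := by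
        apply mul_le_mul hMlow (Real.exp_le_exp.mpr (by linarith)) (Real.exp_pos _).le
          (Nat.cast_nonneg M)
    _ ≤ ∑ k ∈ Finset.Icc (n - M + 1) n, Real.exp ((k:ℝ)^g) := hblock
    _ ≤ ∑ k ∈ Finset.Icc 1 n, Real.exp ((k:ℝ)^g) := hmono

private lemma pow_rpow_comm {b : ℝ} (hb : 0 ≤ b) (j : ℕ) (g : ℝ) :
    (b^j)^g = (b^g)^j := by
  rw [← Real.rpow_natCast b j, ← Real.rpow_natCast (b^g) j, ← Real.rpow_mul hb,
    ← Real.rpow_mul hb, mul_comm]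

private lemma ind_sum_le (E : Set ℕ) (s : Finset ℕ) (f : ℕ → ℝ) (b : ℝ)
    (hb : 0 ≤ b) (hf : ∀ k ∈ s, f k ≤ b) :
    ∑ k ∈ s, E.indicator f k ≤ ((s.filter (· ∈ E)).card : ℝ) * b := by
  classical
  have h1 : ∑ k ∈ s, E.indicator f k = ∑ k ∈ s.filter (· ∈ E), f k := by
    rw [Finset.sum_filter]
    apply Finset.sum_congr rfl
    intro k _
    simp [Set.indicator_apply]
  rw [h1]
  have h2 := Finset.sum_le_card_nsmul (s.filter (· ∈ E)) f b
    (fun k hk => hf k (Finset.mem_of_mem_filter k hk))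
  rwa [nsmul_eq_mul] at h2

set_option maxHeartbeats 1000000 in
/-- Lemma 4.4: for `0 < γ ≤ 1` there is `E_γ ⊆ ℕ` with positive upper `β^γ`-density but
zero upper `β^{γ'}`-density for every `0 ≤ γ' < γ`. -/
theorem stmt11 (γ : ℝ) (h0 : 0 < γ) (h1 : γ ≤ 1) :
    ∃ E : Set ℕ, 0 < upperDensityWt (betaGamma γ) E ∧
      ∀ γ' : ℝ, 0 ≤ γ' → γ' < γ → upperDensityWt (betaGamma γ') E = 0 := by
  classical
  set m : ℕ := ⌈2/γ⌉₊ with hm_def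
  set B : ℕ := 2^m with hB_def
  set N : ℕ → ℕ := fun j => B^j with hN_def
  set L : ℕ → ℕ := fun j => ⌈((N j : ℝ))^(1-γ)⌉₊ with hL_def
  set E : Set ℕ := {k | ∃ j, 1 ≤ j ∧ N j - L j + 1 ≤ k ∧ k ≤ N j} with hE_def
  -- basic facts about the construction
  have hmγ2 : (2:ℝ) ≤ (m:ℝ) * γ := by
    have h2γ : (2:ℝ)/γ ≤ (m:ℝ) := Nat.le_ceil _
    rw [div_le_iff₀ h0] at h2γ; linarith
  have hm2 : 2 ≤ m := by
    have hm1 : (2:ℝ) ≤ (m:ℝ) := by nlinarith [Nat.cast_nonneg (α := ℝ) m]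
    exact_mod_cast hm1
  have hB4 : 4 ≤ B := by
    have h : (2:ℕ)^2 ≤ 2^m := Nat.pow_le_pow_right (by norm_num) hm2
    simpa [hB_def] using h
  have hBR : (4:ℝ) ≤ (B:ℝ) := by exact_mod_cast hB4
  have hBγ4 : (4:ℝ) ≤ (B:ℝ)^γ := by
    have hBc : (B:ℝ) = (2:ℝ)^(m:ℕ) := by rw [hB_def]; push_cast; ring
    rw [hBc, ← Real.rpow_natCast (2:ℝ) m, ← Real.rpow_mul (by norm_num : (0:ℝ) ≤ 2)]
    have h4 : (2:ℝ)^(2:ℝ) = 4 := by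
      calc (2:ℝ)^(2:ℝ) = (2:ℝ)^((2:ℕ):ℝ) := by norm_num
        _ = (2:ℝ)^(2:ℕ) := Real.rpow_natCast 2 2
        _ = 4 := by norm_num
    rw [← h4]
    exact Real.rpow_le_rpow_of_exponent_le one_le_two hmγ2
  have hBpos : 0 < B := by omega
  have hNpos : ∀ j, 0 < N j := fun j => pow_pos hBpos j
  have hN1 : ∀ j, 1 ≤ N j := fun j => hNpos j
  have hNmono : ∀ {i j : ℕ}, i ≤ j → N i ≤ N j := fun h => Nat.pow_le_pow_right (by omega) h
  have hNgt : ∀ j, j < N j := by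
    intro j
    calc j < 2^j := Nat.lt_two_pow_self
      _ ≤ B^j := Nat.pow_le_pow_left (by omega) j
  have hNR1 : ∀ j, (1:ℝ) ≤ (N j : ℝ) := fun j => by exact_mod_cast hN1 j
  have hNcast : ∀ j, (N j : ℝ) = (B:ℝ)^j := fun j => by simp only [hN_def]; push_cast; ring
  have hNγ4 : ∀ j, 1 ≤ j → (4:ℝ) ≤ ((N j:ℝ))^γ := by
    intro j hj
    rw [hNcast, pow_rpow_comm (by positivity)]
    calc (4:ℝ) ≤ 4^j := le_self_pow₀ (by norm_num) (by omega)
      _ ≤ ((B:ℝ)^γ)^j := pow_le_pow_left₀ (by norm_num) hBγ4 j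
  have hN4R : ∀ j, 1 ≤ j → (4:ℝ) ≤ (N j:ℝ) := by
    intro j hj
    have h5 : N 1 ≤ N j := hNmono hj
    have h6 : N 1 = B := by simp [hN_def]
    calc (4:ℝ) ≤ (B:ℝ) := hBR
      _ ≤ (N j:ℝ) := by rw [← h6]; exact_mod_cast h5
  have hN4 : ∀ j, 1 ≤ j → 4 ≤ N j := by
    intro j hj; exact_mod_cast hN4R j hj
  have hLdef' : ∀ j, L j = ⌈((N j : ℝ))^(1-γ)⌉₊ := fun j => by simp only [hL_def]
  have hLlow : ∀ j, ((N j:ℝ))^(1-γ) ≤ (L j:ℝ) := fun j => by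
    rw [hLdef']; exact Nat.le_ceil _
  have hLup : ∀ j, (L j:ℝ) ≤ ((N j:ℝ))^(1-γ) + 1 := fun j => by
    rw [hLdef']
    exact (Nat.ceil_lt_add_one (by positivity)).le
  have hpow4 : ∀ j, 1 ≤ j → ((N j:ℝ))^(1-γ) ≤ (N j:ℝ)/4 := by
    intro j hj
    have hNp : (0:ℝ) < N j := by linarith [hNR1 j]
    rw [Real.rpow_sub hNp, Real.rpow_one,
      div_le_div_iff₀ (Real.rpow_pos_of_pos hNp γ) (by norm_num : (0:ℝ) < 4)]
    nlinarith [hNγ4 j hj, hNp.le]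
  have hLhalfR : ∀ j, 1 ≤ j → (L j:ℝ) ≤ (N j:ℝ)/2 := by
    intro j hj
    have ha := hLup j; have hb := hpow4 j hj; have hc := hN4R j hj; linarith
  have hLN : ∀ j, 1 ≤ j → L j ≤ N j := by
    intro j hj
    have h7 : (L j:ℝ) ≤ (N j:ℝ) := by
      have := hLhalfR j hj; have := hN4R j hj; linarith
    exact_mod_cast h7
  have hNLcast : ∀ j, 1 ≤ j → ((N j - L j:ℕ):ℝ) = (N j:ℝ) - (L j:ℝ) :=
    fun j hj => by rw [Nat.cast_sub (hLN j hj)]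
  have hNLhalf : ∀ j, 1 ≤ j → (N j:ℝ)/2 ≤ ((N j - L j:ℕ):ℝ) := by
    intro j hj; rw [hNLcast j hj]; have := hLhalfR j hj; linarith
  have hgap : ∀ j, 1 ≤ j → N j ≤ N (j+1) - L (j+1) := by
    intro j hj
    have h8 : (N (j+1):ℝ)/2 ≤ ((N (j+1) - L (j+1):ℕ):ℝ) := hNLhalf (j+1) (by omega)
    have h9 : (N (j+1):ℝ) = (B:ℝ) * (N j:ℝ) := by rw [hNcast, hNcast]; ring
    have h10 : (N j:ℝ) ≤ ((N (j+1) - L (j+1):ℕ):ℝ) := by nlinarith [hNR1 j, hBR]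
    exact_mod_cast h10
  have hblock_far : ∀ j i, 1 ≤ j → j + 1 ≤ i → N (j+1) - L (j+1) ≤ N i - L i := by
    intro j i hj hij
    rcases Nat.eq_or_lt_of_le hij with h | h
    · rw [← h]
    · obtain ⟨i', rfl⟩ : ∃ i', i = i' + 1 := ⟨i - 1, by omega⟩
      have h11 : N i' ≤ N (i'+1) - L (i'+1) := hgap i' (by omega)
      have h12 : N (j+1) ≤ N i' := hNmono (by omega)
      have h13 := Nat.sub_le (N (j+1)) (L (j+1))
      omega
  have hEdef' : ∀ k, k ∈ E ↔ ∃ j, 1 ≤ j ∧ N j - L j + 1 ≤ k ∧ k ≤ N j := by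
    intro k; rw [hE_def]; simp only [Set.mem_setOf_eq]
  have hEmem : ∀ j, 1 ≤ j → ∀ k, N j - L j + 1 ≤ k → k ≤ N j → k ∈ E :=
    fun j hj k hk1 hk2 => (hEdef' k).mpr ⟨j, hj, hk1, hk2⟩
  have hindnonneg : ∀ (g:ℝ) (k:ℕ), 0 ≤ E.indicator (fun x => Real.exp (((x:ℕ):ℝ)^g)) k :=
    fun g k => Set.indicator_nonneg (fun x _ => (Real.exp_pos _).le) k
  have hdenpos : ∀ (g : ℝ) (n : ℕ), 1 ≤ n → 0 < ∑ k ∈ Finset.Icc 1 n, Real.exp ((k:ℝ)^g) := by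
    intro g n hn
    apply Finset.sum_pos (fun k _ => Real.exp_pos _)
    exact ⟨1, Finset.mem_Icc.mpr ⟨le_refl 1, hn⟩⟩
  refine ⟨E, ?_, ?_⟩
  · -- positive upper β^γ density
    have hgoal : upperDensityWt (betaGamma γ) E = Filter.limsup (fun n : ℕ =>
        (∑ k ∈ Finset.Icc 1 n, E.indicator (fun x => Real.exp ((x:ℝ)^γ)) k)
          / ∑ k ∈ Finset.Icc 1 n, Real.exp ((k:ℝ)^γ)) Filter.atTop := by
      rw [upperDensityWt]; simp only [betaGamma]
    rw [hgoal]
    have hkey : ∀ j, 1 ≤ j → γ * Real.exp (-5) ≤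
        (∑ k ∈ Finset.Icc 1 (N j), E.indicator (fun x => Real.exp ((x:ℝ)^γ)) k)
          / ∑ k ∈ Finset.Icc 1 (N j), Real.exp ((k:ℝ)^γ) := by
      intro j hj
      have hNp : (0:ℝ) < (N j:ℝ) := by linarith [hNR1 j]
      have hden : ∑ k ∈ Finset.Icc 1 (N j), Real.exp ((k:ℝ)^γ)
          ≤ (Real.exp 1 / γ) * ((N j:ℝ))^(1-γ) * Real.exp (((N j:ℝ))^γ) :=
        sum_beta_le h0 h1 (hN1 j)
      have hsub : Finset.Icc (N j - L j + 1) (N j) ⊆ Finset.Icc 1 (N j) := by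
        intro k hk; rw [Finset.mem_Icc] at *; omega
      have hnum1 : ∑ k ∈ Finset.Icc (N j - L j + 1) (N j), Real.exp ((k:ℝ)^γ)
          ≤ ∑ k ∈ Finset.Icc 1 (N j), E.indicator (fun x => Real.exp ((x:ℝ)^γ)) k := by
        calc ∑ k ∈ Finset.Icc (N j - L j + 1) (N j), Real.exp ((k:ℝ)^γ)
            = ∑ k ∈ Finset.Icc (N j - L j + 1) (N j),
                E.indicator (fun x => Real.exp ((x:ℝ)^γ)) k := by
              apply Finset.sum_congr rfl
              intro k hk
              rw [Finset.mem_Icc] at hk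
              rw [Set.indicator_of_mem (hEmem j hj k hk.1 hk.2)]
          _ ≤ _ := Finset.sum_le_sum_of_subset_of_nonneg hsub (fun k _ _ => hindnonneg γ k)
      have hblock := sum_block_ge h0.le (hLN j hj)
      have hNLpos : (0:ℝ) < ((N j - L j:ℕ):ℝ) := by
        have := hNLhalf j hj; linarith
      have hexp4 : ((N j:ℝ))^γ ≤ (((N j - L j:ℕ)):ℝ)^γ + 4 := by
        have htan := pow_le_tangent h0.le h1 hNLpos
          (show ((N j - L j:ℕ):ℝ) ≤ (N j:ℝ) by
            rw [hNLcast j hj]; linarith [Nat.cast_nonneg (α := ℝ) (L j)])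
        have h1' : (((N j - L j:ℕ)):ℝ)^(γ-1) ≤ ((N j:ℝ)/2)^(γ-1) :=
          Real.rpow_le_rpow_of_nonpos (by positivity) (hNLhalf j hj) (by linarith)
        have h2' : ((N j:ℝ)/2)^(γ-1) = (N j:ℝ)^(γ-1) * (2:ℝ)^(1-γ) := by
          rw [Real.div_rpow hNp.le (by norm_num)]
          rw [show (1-γ) = -(γ-1) by ring, Real.rpow_neg (by norm_num)]
          field_simp
        have h3' : (N j:ℝ)^(γ-1) * (N j:ℝ)^(1-γ) = 1 := by
          rw [← Real.rpow_add hNp]; norm_num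
        have h4' : (2:ℝ)^(1-γ) ≤ 2 := by
          calc (2:ℝ)^(1-γ) ≤ (2:ℝ)^(1:ℝ) :=
                Real.rpow_le_rpow_of_exponent_le one_le_two (by linarith)
            _ = 2 := Real.rpow_one _
        have hsubeq : (N j:ℝ) - ((N j - L j:ℕ):ℝ) = (L j:ℝ) := by rw [hNLcast j hj]; ring
        have hbound : γ * (((N j - L j:ℕ)):ℝ)^(γ-1) * ((N j:ℝ) - ((N j - L j:ℕ):ℝ)) ≤ 4 := by
          rw [hsubeq]
          have hL0 : (0:ℝ) ≤ (L j:ℝ) := Nat.cast_nonneg _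
          have hnn : (0:ℝ) ≤ (((N j - L j:ℕ)):ℝ)^(γ-1) := (Real.rpow_pos_of_pos hNLpos _).le
          calc γ * (((N j - L j:ℕ)):ℝ)^(γ-1) * (L j:ℝ)
              ≤ 1 * (((N j:ℝ)/2)^(γ-1)) * (((N j:ℝ))^(1-γ) + 1) := by
                apply mul_le_mul (mul_le_mul h1 h1' hnn zero_le_one) (hLup j) hL0 (by positivity)
            _ = (2:ℝ)^(1-γ) * ((N j:ℝ)^(γ-1) * (N j:ℝ)^(1-γ) + (N j:ℝ)^(γ-1)) := by
                rw [h2']; ring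
            _ ≤ 2 * (1 + 1) := by
                have h5' : (N j:ℝ)^(γ-1) ≤ 1 :=
                  Real.rpow_le_one_of_one_le_of_nonpos (hNR1 j) (by linarith)
                apply mul_le_mul h4' (by rw [h3']; linarith) (by rw [h3']; positivity) (by norm_num)
            _ = 4 := by norm_num
        linarith [htan]
      have hnum : ((N j:ℝ))^(1-γ) * Real.exp (((N j:ℝ))^γ - 4)
          ≤ ∑ k ∈ Finset.Icc 1 (N j), E.indicator (fun x => Real.exp ((x:ℝ)^γ)) k := by
        calc ((N j:ℝ))^(1-γ) * Real.exp (((N j:ℝ))^γ - 4)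
            ≤ (L j:ℝ) * Real.exp ((((N j - L j:ℕ)):ℝ)^γ) := by
              apply mul_le_mul (hLlow j) (Real.exp_le_exp.mpr (by linarith [hexp4]))
                (Real.exp_pos _).le (Nat.cast_nonneg _)
          _ ≤ ∑ k ∈ Finset.Icc (N j - L j + 1) (N j), Real.exp ((k:ℝ)^γ) := hblock
          _ ≤ _ := hnum1
      rw [le_div_iff₀ (hdenpos γ (N j) (hN1 j))]
      calc γ * Real.exp (-5) * ∑ k ∈ Finset.Icc 1 (N j), Real.exp ((k:ℝ)^γ)
          ≤ γ * Real.exp (-5) * ((Real.exp 1 / γ) * ((N j:ℝ))^(1-γ) * Real.exp (((N j:ℝ))^γ)) := by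
            apply mul_le_mul_of_nonneg_left hden (by positivity)
        _ = ((N j:ℝ))^(1-γ) * (Real.exp (-5) * Real.exp 1 * Real.exp (((N j:ℝ))^γ)) := by
            field_simp
        _ = ((N j:ℝ))^(1-γ) * Real.exp (((N j:ℝ))^γ - 4) := by
            rw [← Real.exp_add, ← Real.exp_add]
            congr 2
            ring
        _ ≤ _ := hnum
    have hupper : ∀ n : ℕ, (∑ k ∈ Finset.Icc 1 n, E.indicator (fun x => Real.exp ((x:ℝ)^γ)) k)
        / ∑ k ∈ Finset.Icc 1 n, Real.exp ((k:ℝ)^γ) ≤ 1 := by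
      intro n
      rcases Nat.eq_zero_or_pos n with rfl | hn
      · norm_num
      · rw [div_le_one (hdenpos γ n hn)]
        apply Finset.sum_le_sum
        intro k _
        exact Set.indicator_le_self' (fun x _ => (Real.exp_pos _).le) k
    have hfreq : ∃ᶠ n in Filter.atTop, γ * Real.exp (-5) ≤
        (∑ k ∈ Finset.Icc 1 n, E.indicator (fun x => Real.exp ((x:ℝ)^γ)) k)
          / ∑ k ∈ Finset.Icc 1 n, Real.exp ((k:ℝ)^γ) := by
      rw [Filter.frequently_atTop]
      intro a
      exact ⟨N (max 1 a), le_trans (le_max_right 1 a) (hNgt (max 1 a)).le,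
        hkey (max 1 a) (le_max_left 1 a)⟩
    have hlim := Filter.le_limsup_of_frequently_le hfreq
      (Filter.isBoundedUnder_of ⟨1, hupper⟩)
    have hcpos : 0 < γ * Real.exp (-5) := by positivity
    linarith
  · -- zero upper β^γ' density
    intro g hg0 hglt
    have hg1 : g ≤ 1 := le_trans hglt.le h1
    have hgoal : upperDensityWt (betaGamma g) E = Filter.limsup (fun n : ℕ =>
        (∑ k ∈ Finset.Icc 1 n, E.indicator (fun x => Real.exp ((x:ℝ)^g)) k)
          / ∑ k ∈ Finset.Icc 1 n, Real.exp ((k:ℝ)^g)) Filter.atTop := by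
      rw [upperDensityWt]; simp only [betaGamma]
    rw [hgoal]
    apply Filter.Tendsto.limsup_eq
    -- auxiliary geometric sequences
    have hB0R : (0:ℝ) < (B:ℝ) := by linarith
    have hB1R : (1:ℝ) < (B:ℝ) := by linarith
    set ρ1 : ℝ := (B:ℝ)^(g - γ) with hρ1_def
    set ρ2 : ℝ := (B:ℝ)^(g - 1) with hρ2_def
    have hρ1pos : 0 < ρ1 := Real.rpow_pos_of_pos hB0R _
    have hρ2pos : 0 < ρ2 := Real.rpow_pos_of_pos hB0R _
    have hρ1lt : ρ1 < 1 := Real.rpow_lt_one_of_one_lt_of_neg hB1R (by linarith)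
    have hρ2lt : ρ2 < 1 := Real.rpow_lt_one_of_one_lt_of_neg hB1R (by linarith)
    have hNρ1 : ∀ j, ((N j:ℝ))^(g-γ) = ρ1^j := by
      intro j; rw [hNcast, pow_rpow_comm hB0R.le]
    have hNρ2 : ∀ j, ((N j:ℝ))^(g-1) = ρ2^j := by
      intro j; rw [hNcast, pow_rpow_comm hB0R.le]
    set A : ℕ → ℝ := fun j => ∑ i ∈ Finset.Icc 1 j, (L i:ℝ) with hA_def
    have hAnonneg : ∀ j, 0 ≤ A j := fun j => Finset.sum_nonneg fun i _ => Nat.cast_nonneg _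
    have hAle : ∀ j, A j ≤ (j:ℝ) * (((N j:ℝ))^(1-γ) + 1) := by
      intro j
      have hterm : ∀ i ∈ Finset.Icc 1 j, (L i:ℝ) ≤ ((N j:ℝ))^(1-γ) + 1 := by
        intro i hi
        rw [Finset.mem_Icc] at hi
        have h1' := hLup i
        have h2' : ((N i:ℝ))^(1-γ) ≤ ((N j:ℝ))^(1-γ) :=
          Real.rpow_le_rpow (by positivity) (by exact_mod_cast hNmono hi.2) (by linarith)
        linarith
      have h3' := Finset.sum_le_card_nsmul _ _ _ hterm
      rw [nsmul_eq_mul, Nat.card_Icc, Nat.add_sub_cancel] at h3'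
      exact h3'
    set u : ℕ → ℝ := fun j => 2 * Real.exp 6 * A j / ((N j:ℝ))^(1-g) with hu_def
    set v : ℕ → ℝ := fun j => 8 * Real.exp 6 * (L (j+1):ℝ) / ((N (j+1):ℝ))^(1-g) with hv_def
    have hu0 : ∀ j, 0 ≤ u j := fun j =>
      div_nonneg (mul_nonneg (by positivity) (hAnonneg j))
        (Real.rpow_nonneg (Nat.cast_nonneg _) _)
    have hv0 : ∀ j, 0 ≤ v j := fun j =>
      div_nonneg (by positivity) (Real.rpow_nonneg (Nat.cast_nonneg _) _)
    have hgeo1 : Filter.Tendsto (fun j:ℕ => (j:ℝ) * ρ1^j) Filter.atTop (𝓝 0) := by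
      have hs := (summable_pow_mul_geometric_of_norm_lt_one 1
        (r := ρ1) (by rw [Real.norm_eq_abs, abs_of_pos hρ1pos]; exact hρ1lt)).tendsto_atTop_zero
      simpa using hs
    have hgeo2 : Filter.Tendsto (fun j:ℕ => (j:ℝ) * ρ2^j) Filter.atTop (𝓝 0) := by
      have hs := (summable_pow_mul_geometric_of_norm_lt_one 1
        (r := ρ2) (by rw [Real.norm_eq_abs, abs_of_pos hρ2pos]; exact hρ2lt)).tendsto_atTop_zero
      simpa using hs
    have hgeo1' : Filter.Tendsto (fun j:ℕ => ρ1^j) Filter.atTop (𝓝 0) :=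
      tendsto_pow_atTop_nhds_zero_of_lt_one hρ1pos.le hρ1lt
    have hgeo2' : Filter.Tendsto (fun j:ℕ => ρ2^j) Filter.atTop (𝓝 0) :=
      tendsto_pow_atTop_nhds_zero_of_lt_one hρ2pos.le hρ2lt
    have hulim : Filter.Tendsto u Filter.atTop (𝓝 0) := by
      refine squeeze_zero hu0 (g := fun j : ℕ => 2 * Real.exp 6 * ((j:ℝ)*ρ1^j + (j:ℝ)*ρ2^j))
        (fun j => ?_) ?_
      · have hNp : (0:ℝ) < (N j:ℝ) := by linarith [hNR1 j]
        have hXpos : (0:ℝ) < ((N j:ℝ))^(1-g) := Real.rpow_pos_of_pos hNp _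
        have hq1 : ((N j:ℝ))^(1-γ) / ((N j:ℝ))^(1-g) = ρ1^j := by
          rw [← Real.rpow_sub hNp, show (1-γ)-(1-g) = g - γ by ring, hNρ1]
        have hq2 : 1 / ((N j:ℝ))^(1-g) = ρ2^j := by
          rw [← hNρ2, show g-1 = -(1-g) by ring, Real.rpow_neg hNp.le, one_div]
        calc u j ≤ 2 * Real.exp 6 * ((j:ℝ) * (((N j:ℝ))^(1-γ) + 1)) / ((N j:ℝ))^(1-g) := by
              simp only [hu_def]
              rw [div_eq_mul_inv, div_eq_mul_inv]
              apply mul_le_mul_of_nonneg_right _ (inv_nonneg.mpr hXpos.le)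
              exact mul_le_mul_of_nonneg_left (hAle j) (by positivity)
          _ = 2 * Real.exp 6 * ((j:ℝ)*ρ1^j + (j:ℝ)*ρ2^j) := by
              rw [← hq1, ← hq2]
              field_simp
              try ring
      · have hs := ((hgeo1.add hgeo2).const_mul (2 * Real.exp 6))
        simpa using hs
    have hvlim : Filter.Tendsto v Filter.atTop (𝓝 0) := by
      refine squeeze_zero hv0 (g := fun j : ℕ => 8 * Real.exp 6 * (ρ1^j + ρ2^j))
        (fun j => ?_) ?_
      · have hNp : (0:ℝ) < (N (j+1):ℝ) := by linarith [hNR1 (j+1)]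
        have hXpos : (0:ℝ) < ((N (j+1):ℝ))^(1-g) := Real.rpow_pos_of_pos hNp _
        have hq1 : ((N (j+1):ℝ))^(1-γ) / ((N (j+1):ℝ))^(1-g) = ρ1^(j+1) := by
          rw [← Real.rpow_sub hNp, show (1-γ)-(1-g) = g - γ by ring, hNρ1]
        have hq2 : 1 / ((N (j+1):ℝ))^(1-g) = ρ2^(j+1) := by
          rw [← hNρ2, show g-1 = -(1-g) by ring, Real.rpow_neg hNp.le, one_div]
        have hmono1 : ρ1^(j+1) ≤ ρ1^j := pow_le_pow_of_le_one hρ1pos.le hρ1lt.le (Nat.le_succ j)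
        have hmono2 : ρ2^(j+1) ≤ ρ2^j := pow_le_pow_of_le_one hρ2pos.le hρ2lt.le (Nat.le_succ j)
        calc v j ≤ 8 * Real.exp 6 * (((N (j+1):ℝ))^(1-γ) + 1) / ((N (j+1):ℝ))^(1-g) := by
              simp only [hv_def]
              rw [div_eq_mul_inv, div_eq_mul_inv]
              apply mul_le_mul_of_nonneg_right _ (inv_nonneg.mpr hXpos.le)
              exact mul_le_mul_of_nonneg_left (hLup (j+1)) (by positivity)
          _ = 8 * Real.exp 6 * (ρ1^(j+1) + ρ2^(j+1)) := by
              rw [← hq1, ← hq2]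
              field_simp
              try ring
          _ ≤ 8 * Real.exp 6 * (ρ1^j + ρ2^j) := by
              exact mul_le_mul_of_nonneg_left (add_le_add hmono1 hmono2) (by positivity)
      · have hs := ((hgeo1'.add hgeo2').const_mul (8 * Real.exp 6))
        simpa using hs
    rw [Metric.tendsto_atTop]
    intro ε hε
    have hεu := hulim.eventually_lt_const (show (0:ℝ) < ε/2 by linarith)
    have hεv := hvlim.eventually_lt_const (show (0:ℝ) < ε/2 by linarith)
    obtain ⟨J0, hJ0⟩ := Filter.eventually_atTop.mp (hεu.and hεv)
    set J := max J0 1 with hJ_def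
    have hJ1 : 1 ≤ J := le_max_right _ _
    refine ⟨N J, ?_⟩
    intro n hn
    have hJn : J ≤ n := le_of_lt (lt_of_lt_of_le (hNgt J) hn)
    set j := Nat.findGreatest (fun i => N i ≤ n) n with hj_def
    have hjn : N j ≤ n := by
      have h := Nat.findGreatest_spec (P := fun i => N i ≤ n) (m := J) hJn hn
      rw [← hj_def] at h
      exact h
    have hjJ : J ≤ j := by
      have h := Nat.le_findGreatest (P := fun i => N i ≤ n) (m := J) hJn hn
      rw [← hj_def] at h
      exact h
    have hj1 : 1 ≤ j := le_trans hJ1 hjJ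
    have hnlt : n < N (j+1) := by
      by_cases hc : j + 1 ≤ n
      · have hlt : Nat.findGreatest (fun i => N i ≤ n) n < j + 1 := by
          rw [← hj_def]; omega
        have := Nat.findGreatest_is_greatest hlt hc
        omega
      · have := hNgt (j+1); omega
    have hn4 : 4 ≤ n := le_trans (hN4 J hJ1) hn
    have hnR4 : (4:ℝ) ≤ (n:ℝ) := by exact_mod_cast hn4
    have hnpos : (0:ℝ) < (n:ℝ) := by linarith
    have hD := denom_ge hg0 hg1 hn4
    set D : ℝ := (n:ℝ)^(1-g)/2 * Real.exp (-6) * Real.exp ((n:ℝ)^g) with hD_def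
    have hDpos : 0 < D := by
      have h20 : (0:ℝ) < (n:ℝ)^(1-g) := Real.rpow_pos_of_pos hnpos _
      simp only [hD_def]
      positivity
    have hsplit : Finset.Icc 1 n = Finset.Icc 1 (N j) ∪ Finset.Icc (N j + 1) n := by
      ext k; simp only [Finset.mem_Icc, Finset.mem_union]; omega
    have hdisj : Disjoint (Finset.Icc 1 (N j)) (Finset.Icc (N j + 1) n) := by
      rw [Finset.disjoint_left]
      intro k hk1 hk2
      rw [Finset.mem_Icc] at hk1 hk2
      omega
    have hnumsplit : ∑ k ∈ Finset.Icc 1 n, E.indicator (fun x => Real.exp ((x:ℝ)^g)) k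
        = ∑ k ∈ Finset.Icc 1 (N j), E.indicator (fun x => Real.exp ((x:ℝ)^g)) k
          + ∑ k ∈ Finset.Icc (N j + 1) n, E.indicator (fun x => Real.exp ((x:ℝ)^g)) k := by
      rw [hsplit, Finset.sum_union hdisj]
    have hS1card : (((Finset.Icc 1 (N j)).filter (· ∈ E)).card : ℝ) ≤ A j := by
      have hsub : (Finset.Icc 1 (N j)).filter (· ∈ E) ⊆
          (Finset.Icc 1 j).biUnion (fun i => Finset.Icc (N i - L i + 1) (N i)) := by
        intro k hk
        rw [Finset.mem_filter, Finset.mem_Icc] at hk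
        obtain ⟨⟨hk1, hk2⟩, hkE⟩ := hk
        obtain ⟨i, hi1, hi2, hi3⟩ := (hEdef' k).mp hkE
        rw [Finset.mem_biUnion]
        refine ⟨i, Finset.mem_Icc.mpr ⟨hi1, ?_⟩, Finset.mem_Icc.mpr ⟨hi2, hi3⟩⟩
        by_contra hij
        push_neg at hij
        have h1' := hblock_far j i hj1 hij
        have h2' := hgap j hj1
        omega
      have hcard_nat : ((Finset.Icc 1 (N j)).filter (· ∈ E)).card
          ≤ ∑ i ∈ Finset.Icc 1 j, L i := by
        calc ((Finset.Icc 1 (N j)).filter (· ∈ E)).card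
            ≤ ((Finset.Icc 1 j).biUnion (fun i => Finset.Icc (N i - L i + 1) (N i))).card :=
              Finset.card_le_card hsub
          _ ≤ ∑ i ∈ Finset.Icc 1 j, (Finset.Icc (N i - L i + 1) (N i)).card :=
              Finset.card_biUnion_le
          _ ≤ ∑ i ∈ Finset.Icc 1 j, L i := by
              apply Finset.sum_le_sum
              intro i hi
              rw [Finset.mem_Icc] at hi
              have := hLN i hi.1
              rw [Nat.card_Icc]
              omega
      calc (((Finset.Icc 1 (N j)).filter (· ∈ E)).card : ℝ)
          ≤ ((∑ i ∈ Finset.Icc 1 j, L i : ℕ) : ℝ) := by exact_mod_cast hcard_nat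
        _ = A j := by simp only [hA_def]; push_cast; rfl
    have hNjn : (N j:ℝ) ≤ (n:ℝ) := by exact_mod_cast hjn
    have hNjpos : (0:ℝ) < (N j:ℝ) := by linarith [hNR1 j]
    have hS1 : ∑ k ∈ Finset.Icc 1 (N j), E.indicator (fun x => Real.exp ((x:ℝ)^g)) k
        ≤ A j * Real.exp (((N j:ℝ))^g) := by
      have hble : ∀ k ∈ Finset.Icc 1 (N j), Real.exp ((k:ℝ)^g) ≤ Real.exp (((N j:ℝ))^g) := by
        intro k hk
        rw [Finset.mem_Icc] at hk
        exact Real.exp_le_exp.mpr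
          (Real.rpow_le_rpow (by positivity) (by exact_mod_cast hk.2) hg0)
      have hb := ind_sum_le E (Finset.Icc 1 (N j)) (fun x => Real.exp ((x:ℝ)^g))
        (Real.exp (((N j:ℝ))^g)) (Real.exp_pos _).le hble
      exact hb.trans (mul_le_mul_of_nonneg_right hS1card (Real.exp_pos _).le)
    have hS1D : ∑ k ∈ Finset.Icc 1 (N j), E.indicator (fun x => Real.exp ((x:ℝ)^g)) k
        ≤ u j * D := by
      have hpow_mono : ((N j:ℝ))^(1-g) ≤ (n:ℝ)^(1-g) :=
        Real.rpow_le_rpow hNjpos.le hNjn (by linarith)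
      have hexp_mono : Real.exp (((N j:ℝ))^g) ≤ Real.exp ((n:ℝ)^g) :=
        Real.exp_le_exp.mpr (Real.rpow_le_rpow hNjpos.le hNjn hg0)
      have hXpos : (0:ℝ) < ((N j:ℝ))^(1-g) := Real.rpow_pos_of_pos hNjpos _
      have hq : 1 ≤ (n:ℝ)^(1-g)/((N j:ℝ))^(1-g) := (one_le_div hXpos).mpr hpow_mono
      calc ∑ k ∈ Finset.Icc 1 (N j), E.indicator (fun x => Real.exp ((x:ℝ)^g)) k
          ≤ A j * Real.exp (((N j:ℝ))^g) := hS1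
        _ ≤ A j * Real.exp ((n:ℝ)^g) := mul_le_mul_of_nonneg_left hexp_mono (hAnonneg j)
        _ = A j * Real.exp ((n:ℝ)^g) * 1 := by ring
        _ ≤ A j * Real.exp ((n:ℝ)^g) * ((n:ℝ)^(1-g)/((N j:ℝ))^(1-g)) :=
            mul_le_mul_of_nonneg_left hq (mul_nonneg (hAnonneg j) (Real.exp_pos _).le)
        _ = u j * D := by
            simp only [hu_def, hD_def]
            rw [Real.exp_neg]
            field_simp [hXpos.ne']
            try ring
    have hS2D : ∑ k ∈ Finset.Icc (N j + 1) n, E.indicator (fun x => Real.exp ((x:ℝ)^g)) k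
        ≤ v j * D := by
      by_cases hcase : n ≤ N (j+1) - L (j+1)
      · have hzero : ∑ k ∈ Finset.Icc (N j + 1) n,
            E.indicator (fun x => Real.exp ((x:ℝ)^g)) k = 0 := by
          apply Finset.sum_eq_zero
          intro k hk
          rw [Finset.mem_Icc] at hk
          apply Set.indicator_of_notMem
          intro hkE
          obtain ⟨i, hi1, hi2, hi3⟩ := (hEdef' k).mp hkE
          rcases le_or_gt i j with hij | hij
          · have := hNmono hij; omega
          · have h1' := hblock_far j i hj1 hij
            omega
        rw [hzero]
        exact mul_nonneg (hv0 j) hDpos.le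
      · push_neg at hcase
        have hLN1 := hLN (j+1) (by omega)
        have hnhalf : (N (j+1):ℝ)/2 ≤ (n:ℝ) := by
          have h14 := hNLhalf (j+1) (by omega)
          have h15 : ((N (j+1) - L (j+1):ℕ):ℝ) < (n:ℝ) := by exact_mod_cast hcase
          linarith
        have hNp1 : (0:ℝ) < (N (j+1):ℝ) := by linarith [hNR1 (j+1)]
        have hcard2 : (((Finset.Icc (N j + 1) n).filter (· ∈ E)).card : ℝ) ≤ (L (j+1):ℝ) := by
          have hsub2 : (Finset.Icc (N j + 1) n).filter (· ∈ E)
              ⊆ Finset.Icc (N (j+1) - L (j+1) + 1) n := by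
            intro k hk
            rw [Finset.mem_filter, Finset.mem_Icc] at hk
            obtain ⟨⟨hk1, hk2⟩, hkE⟩ := hk
            obtain ⟨i, hi1, hi2, hi3⟩ := (hEdef' k).mp hkE
            rw [Finset.mem_Icc]
            rcases le_or_gt i j with hij | hij
            · have := hNmono hij; omega
            · have hij' : j + 1 ≤ i := hij
              rcases eq_or_lt_of_le hij' with heq | hlt
              · rw [← heq] at hi2 hi3
                omega
              · obtain ⟨i', rfl⟩ : ∃ i', i = i' + 1 := ⟨i - 1, by omega⟩
                have h16 := hgap i' (by omega)
                have h17 : N (j+1) ≤ N i' := hNmono (by omega)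
                omega
          have hcard_le : (Finset.Icc (N (j+1) - L (j+1) + 1) n).card ≤ L (j+1) := by
            rw [Nat.card_Icc]
            omega
          calc (((Finset.Icc (N j + 1) n).filter (· ∈ E)).card : ℝ)
              ≤ ((Finset.Icc (N (j+1) - L (j+1) + 1) n).card : ℝ) := by
                exact_mod_cast Finset.card_le_card hsub2
            _ ≤ (L (j+1):ℝ) := by exact_mod_cast hcard_le
        have hble2 : ∀ k ∈ Finset.Icc (N j + 1) n,
            Real.exp ((k:ℝ)^g) ≤ Real.exp ((n:ℝ)^g) := by
          intro k hk
          rw [Finset.mem_Icc] at hk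
          exact Real.exp_le_exp.mpr
            (Real.rpow_le_rpow (by positivity) (by exact_mod_cast hk.2) hg0)
        have hS2' := (ind_sum_le E (Finset.Icc (N j + 1) n) (fun x => Real.exp ((x:ℝ)^g))
          (Real.exp ((n:ℝ)^g)) (Real.exp_pos _).le hble2).trans
          (mul_le_mul_of_nonneg_right hcard2 (Real.exp_pos _).le)
        have hXpos1 : (0:ℝ) < ((N (j+1):ℝ))^(1-g) := Real.rpow_pos_of_pos hNp1 _
        have hpow_ge : ((N (j+1):ℝ))^(1-g) / 4 ≤ (n:ℝ)^(1-g) := by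
          have h14 : ((N (j+1):ℝ)/2)^(1-g) ≤ (n:ℝ)^(1-g) :=
            Real.rpow_le_rpow (by positivity) hnhalf (by linarith)
          have h15 : ((N (j+1):ℝ)/2)^(1-g) = ((N (j+1):ℝ))^(1-g) / (2:ℝ)^(1-g) :=
            Real.div_rpow hNp1.le (by norm_num) _
          rw [h15] at h14
          have h16 : (2:ℝ)^(1-g) ≤ 4 := by
            calc (2:ℝ)^(1-g) ≤ (2:ℝ)^(1:ℝ) :=
                  Real.rpow_le_rpow_of_exponent_le one_le_two (by linarith)
              _ = 2 := Real.rpow_one _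
              _ ≤ 4 := by norm_num
          have h17 : (0:ℝ) < (2:ℝ)^(1-g) := Real.rpow_pos_of_pos (by norm_num) _
          have h19 : ((N (j+1):ℝ))^(1-g)/4 ≤ ((N (j+1):ℝ))^(1-g)/(2:ℝ)^(1-g) := by
            rw [div_le_div_iff₀ (by norm_num) h17]
            nlinarith [h16, hXpos1.le]
          linarith
        have hq2' : (1:ℝ)/4 ≤ (n:ℝ)^(1-g)/((N (j+1):ℝ))^(1-g) := by
          rw [div_le_div_iff₀ (by norm_num) hXpos1]
          linarith [hpow_ge]
        have hkey2 : (L (j+1):ℝ) * Real.exp ((n:ℝ)^g) ≤ v j * D := by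
          calc (L (j+1):ℝ) * Real.exp ((n:ℝ)^g)
              = (4 * (L (j+1):ℝ) * Real.exp ((n:ℝ)^g)) * (1/4) := by ring
            _ ≤ (4 * (L (j+1):ℝ) * Real.exp ((n:ℝ)^g))
                  * ((n:ℝ)^(1-g)/((N (j+1):ℝ))^(1-g)) := by
                apply mul_le_mul_of_nonneg_left hq2' (by positivity)
            _ = v j * D := by
                simp only [hv_def, hD_def]
                rw [Real.exp_neg]
                field_simp [hXpos1.ne']
                try ring
        exact hS2'.trans hkey2
    have hdpos := hdenpos g n (by omega)
    have hfn : (∑ k ∈ Finset.Icc 1 n, E.indicator (fun x => Real.exp ((x:ℝ)^g)) k)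
        / ∑ k ∈ Finset.Icc 1 n, Real.exp ((k:ℝ)^g) ≤ u j + v j := by
      rw [div_le_iff₀ hdpos]
      calc ∑ k ∈ Finset.Icc 1 n, E.indicator (fun x => Real.exp ((x:ℝ)^g)) k
          = _ + _ := hnumsplit
        _ ≤ u j * D + v j * D := add_le_add hS1D hS2D
        _ = (u j + v j) * D := by ring
        _ ≤ (u j + v j) * ∑ k ∈ Finset.Icc 1 n, Real.exp ((k:ℝ)^g) := by
            apply mul_le_mul_of_nonneg_left hD (by linarith [hu0 j, hv0 j])
    have hjb := hJ0 j (le_trans (le_max_left J0 1) hjJ)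
    rw [Real.dist_eq, sub_zero, abs_of_nonneg (div_nonneg
      (Finset.sum_nonneg fun k _ => hindnonneg g k) hdpos.le)]
    calc (∑ k ∈ Finset.Icc 1 n, E.indicator (fun x => Real.exp ((x:ℝ)^g)) k)
        / ∑ k ∈ Finset.Icc 1 n, Real.exp ((k:ℝ)^g) ≤ u j + v j := hfn
      _ < ε/2 + ε/2 := add_lt_add hjb.1 hjb.2
      _ = ε := by ring
end
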